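/- arXiv:1501.05869 — 11 statements merged into one kernel-verified Lean document; each statement's English description precedes it below -/
import Mathlib

section
/- If T is a compact operator between complex Hilbert spaces H and K, then for every nontrivial closed subspace M of H, the restriction of T to M attains its norm on M. -/
open scoped InnerProductSpace

lemma compact_norm_attained {E K : Type*}
    [NormedAddCommGroup E] [InnerProductSpace ℂ E] [CompleteSpace E] [Nontrivial E]
    [NormedAddCommGroup K] [InnerProductSpace ℂ K] [CompleteSpace K]
    (S : E →L[ℂ] K) (hS : IsCompactOperator S) :
    ∃ u : E, ‖u‖ = 1 ∧ ‖S u‖ = ‖S‖ := by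
  obtain ⟨z, hz⟩ := exists_ne (0 : E)
  by_cases hr : ‖S‖ = 0
  · refine ⟨(‖z‖⁻¹ : ℂ) • z, ?_, ?_⟩
    · rw [norm_smul]
      simp [norm_inv, inv_mul_cancel₀ (norm_ne_zero_iff.2 hz)]
    · have h1 : ‖S ((‖z‖⁻¹ : ℂ) • z)‖ ≤ ‖S‖ * ‖(‖z‖⁻¹ : ℂ) • z‖ := S.le_opNorm _
      have h2 : (0:ℝ) ≤ ‖S ((‖z‖⁻¹ : ℂ) • z)‖ := norm_nonneg _
      rw [hr] at h1 ⊢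
      simpa using le_antisymm (by simpa using h1) h2
  have hr0 : 0 < ‖S‖ := lt_of_le_of_ne (norm_nonneg _) (Ne.symm hr)
  set r : ℝ := ‖S‖ with hrdef
  -- build a norming sequence of unit vectors
  have hseq : ∀ n : ℕ, ∃ u : E, ‖u‖ = 1 ∧ r * (1 - 1 / (n + 1)) < ‖S u‖ := by
    intro n
    have hfrac0 : (0:ℝ) < 1 / ((n:ℝ) + 1) := by positivity
    have hfrac1 : 1 / ((n:ℝ) + 1) ≤ 1 := by
      rw [div_le_one (by positivity)]; linarith [Nat.cast_nonneg (α := ℝ) n]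
    have hlt : r * (1 - 1 / (n + 1)) < ‖S‖ := by nlinarith
    obtain ⟨x, hx1, hx2⟩ := S.exists_lt_apply_of_lt_opNorm hlt
    have hxpos : 0 < ‖S x‖ := lt_of_le_of_lt (by nlinarith) hx2
    have hx0 : x ≠ 0 := by
      intro h; rw [h, map_zero, norm_zero] at hxpos; exact lt_irrefl _ hxpos
    have hxn : 0 < ‖x‖ := norm_pos_iff.2 hx0
    refine ⟨(‖x‖⁻¹ : ℂ) • x, ?_, ?_⟩
    · rw [norm_smul]
      simp [norm_inv, inv_mul_cancel₀ hxn.ne']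
    · have heq : ‖S ((‖x‖⁻¹ : ℂ) • x)‖ = ‖x‖⁻¹ * ‖S x‖ := by
        rw [map_smul, norm_smul]
        simp [norm_inv]
      rw [heq]
      calc r * (1 - 1 / (n + 1)) < ‖S x‖ := hx2
        _ = 1 * ‖S x‖ := (one_mul _).symm
        _ ≤ ‖x‖⁻¹ * ‖S x‖ := by
            apply mul_le_mul_of_nonneg_right _ (norm_nonneg _)
            rw [le_inv_comm₀ one_pos hxn]; simpa using hx1.le
  choose u hu1 hu2 using hseq
  have huS_le : ∀ n, ‖S (u n)‖ ≤ r := fun n => by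
    simpa [hu1 n] using S.le_opNorm (u n)
  have htend : Filter.Tendsto (fun n => ‖S (u n)‖) Filter.atTop (nhds r) := by
    have hlo : Filter.Tendsto (fun n : ℕ => r * (1 - 1 / (n + 1))) Filter.atTop (nhds r) := by
      have h1 : Filter.Tendsto (fun n : ℕ => 1 / ((n:ℝ) + 1)) Filter.atTop (nhds 0) :=
        tendsto_one_div_add_atTop_nhds_zero_nat
      have h2 := (tendsto_const_nhds (x := (1:ℝ)) (f := Filter.atTop (α := ℕ))).sub h1
      have h3 := (tendsto_const_nhds (x := r) (f := Filter.atTop (α := ℕ))).mul h2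
      simpa using h3
    exact tendsto_of_tendsto_of_tendsto_of_le_of_le hlo tendsto_const_nhds
      (fun n => (hu2 n).le) huS_le
  -- A = S† S
  set A : E →L[ℂ] E := (ContinuousLinearMap.adjoint S).comp S with hA
  have hAcompact : IsCompactOperator (A : E → E) := by
    have := hS.clm_comp (ContinuousLinearMap.adjoint S)
    exact this
  have hAnorm : ∀ x : E, ‖A x‖ ≤ r ^ 2 * ‖x‖ := by
    intro x
    calc ‖A x‖ = ‖ContinuousLinearMap.adjoint S (S x)‖ := rfl
      _ = ‖A x‖ := rfl
      _ ≤ ‖A‖ * ‖x‖ := A.le_opNorm x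
      _ = r ^ 2 * ‖x‖ := by
          rw [hA, ContinuousLinearMap.norm_adjoint_comp_self]; ring
  have hinner : ∀ x : E, RCLike.re (⟪A x, x⟫_ℂ) = ‖S x‖ ^ 2 := by
    intro x
    have h : ⟪A x, x⟫_ℂ = ⟪S x, S x⟫_ℂ := by
      simp [hA, ContinuousLinearMap.adjoint_inner_left]
    rw [h, inner_self_eq_norm_sq]
  -- key estimate
  have hkey : ∀ n, ‖A (u n) - ((r:ℂ) ^ 2) • u n‖ ^ 2 ≤ 2 * r ^ 2 * (r ^ 2 - ‖S (u n)‖ ^ 2) := by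
    intro n
    have hexp := norm_sub_sq (𝕜 := ℂ) (A (u n)) (((r:ℂ) ^ 2) • u n)
    have h1 : RCLike.re (⟪A (u n), ((r:ℂ) ^ 2) • u n⟫_ℂ) = r ^ 2 * ‖S (u n)‖ ^ 2 := by
      have hc : ⟪A (u n), ((r:ℂ) ^ 2) • u n⟫_ℂ = ((r ^ 2 * ‖S (u n)‖ ^ 2 : ℝ) : ℂ) := by
        rw [inner_smul_right]
        have h0 : ⟪A (u n), u n⟫_ℂ = ((‖S (u n)‖ ^ 2 : ℝ) : ℂ) := by
          have h : ⟪A (u n), u n⟫_ℂ = ⟪S (u n), S (u n)⟫_ℂ := by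
            simp [hA, ContinuousLinearMap.adjoint_inner_left]
          rw [h, inner_self_eq_norm_sq_to_K]; norm_num
        rw [h0]; push_cast; ring
      rw [hc]; simp [← Complex.ofReal_pow]
    have h2 : ‖((r:ℂ) ^ 2) • u n‖ = r ^ 2 := by
      rw [norm_smul, hu1 n]
      simp [abs_of_nonneg (sq_nonneg r)]
    have h3 : ‖A (u n)‖ ^ 2 ≤ r ^ 4 := by
      have := hAnorm (u n)
      rw [hu1 n, mul_one] at this
      nlinarith [norm_nonneg (A (u n))]
    rw [hexp, h1, h2]
    nlinarith
  have hkey' : Filter.Tendsto (fun n => A (u n) - ((r:ℂ) ^ 2) • u n) Filter.atTop (nhds 0) := by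
    rw [tendsto_zero_iff_norm_tendsto_zero]
    have hub : Filter.Tendsto (fun n => 2 * r ^ 2 * (r ^ 2 - ‖S (u n)‖ ^ 2))
        Filter.atTop (nhds 0) := by
      have h1 : Filter.Tendsto (fun n => ‖S (u n)‖ ^ 2) Filter.atTop (nhds (r ^ 2)) :=
        htend.pow 2
      have h2 := ((tendsto_const_nhds (x := r ^ 2) (f := Filter.atTop (α := ℕ))).sub h1)
      have h3 := (tendsto_const_nhds (x := 2 * r ^ 2) (f := Filter.atTop (α := ℕ))).mul h2
      simpa using h3
    have hsq : Filter.Tendsto (fun n => ‖A (u n) - ((r:ℂ) ^ 2) • u n‖ ^ 2)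
        Filter.atTop (nhds 0) :=
      tendsto_of_tendsto_of_tendsto_of_le_of_le tendsto_const_nhds hub
        (fun n => sq_nonneg _) (fun n => hkey n)
    have := hsq.sqrt
    simpa [Real.sqrt_sq (norm_nonneg _)] using this
  -- extract convergent subsequence of A (u n)
  have hKc : IsCompact (closure (⇑A.toLinearMap '' Metric.closedBall 0 1)) :=
    IsCompactOperator.isCompact_closure_image_closedBall (𝕜₁ := ℂ) (f := A.toLinearMap)
      hAcompact 1
  have hmem : ∀ n, A (u n) ∈ closure (⇑A.toLinearMap '' Metric.closedBall 0 1) := by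
    intro n
    apply subset_closure
    exact ⟨u n, by simp [hu1 n], rfl⟩
  obtain ⟨y, -, φ, hφ, hconv⟩ := hKc.tendsto_subseq hmem
  -- u (φ n) converges to x₀ := (r²)⁻¹ • y
  set x₀ : E := ((r:ℂ) ^ 2)⁻¹ • y with hx₀
  have hr2 : ((r:ℂ) ^ 2) ≠ 0 := pow_ne_zero 2 (Complex.ofReal_ne_zero.2 hr)
  have huconv : Filter.Tendsto (fun n => u (φ n)) Filter.atTop (nhds x₀) := by
    have hdiff : Filter.Tendsto (fun n => A (u (φ n)) - ((r:ℂ) ^ 2) • u (φ n))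
        Filter.atTop (nhds 0) := hkey'.comp hφ.tendsto_atTop
    have hAconv : Filter.Tendsto (fun n => A (u (φ n))) Filter.atTop (nhds y) := hconv
    have hsc : Filter.Tendsto (fun n => ((r:ℂ) ^ 2) • u (φ n)) Filter.atTop (nhds y) := by
      have := hAconv.sub hdiff
      simpa using this
    have := hsc.const_smul (((r:ℂ) ^ 2)⁻¹)
    simpa [hx₀, smul_smul, inv_mul_cancel₀ hr2] using this
  have hx₀norm : ‖x₀‖ = 1 := by
    have := (continuous_norm.tendsto x₀).comp huconv
    have h1 : Filter.Tendsto (fun n => ‖u (φ n)‖) Filter.atTop (nhds ‖x₀‖) := this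
    have h2 : Filter.Tendsto (fun n => ‖u (φ n)‖) Filter.atTop (nhds 1) := by
      simpa [hu1] using tendsto_const_nhds (x := (1:ℝ)) (f := Filter.atTop (α := ℕ))
    exact tendsto_nhds_unique h1 h2
  have hx₀S : ‖S x₀‖ = r := by
    have h1 : Filter.Tendsto (fun n => ‖S (u (φ n))‖) Filter.atTop (nhds ‖S x₀‖) :=
      ((continuous_norm.comp S.continuous).tendsto x₀).comp huconv
    have h2 : Filter.Tendsto (fun n => ‖S (u (φ n))‖) Filter.atTop (nhds r) :=
      htend.comp hφ.tendsto_atTop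
    exact tendsto_nhds_unique h1 h2
  exact ⟨x₀, hx₀norm, hx₀S⟩

theorem compact_is_absolutely_norming {H K : Type*}
    [NormedAddCommGroup H] [InnerProductSpace ℂ H] [CompleteSpace H]
    [NormedAddCommGroup K] [InnerProductSpace ℂ K] [CompleteSpace K]
    (T : H →L[ℂ] K) (hT : IsCompactOperator T) :
    ∀ M : Submodule ℂ H, IsClosed (M : Set H) → M ≠ ⊥ →
      ∃ x : H, x ∈ M ∧ ‖x‖ = 1 ∧ ‖T x‖ = ‖T.comp M.subtypeL‖ := by
  intro M hM hMbot
  haveI : CompleteSpace M := hM.completeSpace_coe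
  haveI : Nontrivial M := Submodule.nontrivial_iff_ne_bot.2 hMbot
  have hS : IsCompactOperator (T.comp M.subtypeL : M → K) := hT.comp_clm M.subtypeL
  obtain ⟨u, hu1, hu2⟩ := compact_norm_attained (T.comp M.subtypeL) hS
  exact ⟨u, u.2, hu1, hu2⟩
end

section
/- A self-adjoint bounded operator T on a complex Hilbert space H attains its norm on the unit sphere if and only if ‖T‖ or −‖T‖ is an eigenvalue of T. -/
theorem selfAdjoint_norming_iff_eigenvalue {H : Type*}
    [NormedAddCommGroup H] [InnerProductSpace ℂ H] [CompleteSpace H]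
    (T : H →L[ℂ] H) (hT : IsSelfAdjoint T) :
    (∃ x : H, ‖x‖ = 1 ∧ ‖T x‖ = ‖T‖) ↔
      (Module.End.HasEigenvalue (T : H →ₗ[ℂ] H) (‖T‖ : ℂ) ∨
       Module.End.HasEigenvalue (T : H →ₗ[ℂ] H) (-(‖T‖ : ℂ))) := by
  constructor
  · rintro ⟨x, hx1, hxT⟩
    have hx0 : x ≠ 0 := by intro h; rw [h, norm_zero] at hx1; norm_num at hx1
    set c : ℝ := ‖T‖ with hc
    -- ⟪T (T x), x⟫ = ‖T x‖ ^ 2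
    have hinner : (inner ℂ (T (T x)) x : ℂ) = (‖T x‖ : ℂ) ^ 2 := by
      have h1 := hT.isSymmetric (T x) x
      simp only [ContinuousLinearMap.coe_coe] at h1
      rw [h1, inner_self_eq_norm_sq_to_K]; norm_cast
    -- T (T x) = c^2 • x
    have hkey : T (T x) = ((c : ℂ) ^ 2) • x := by
      have hle : ‖T (T x)‖ ≤ c ^ 2 := by
        calc ‖T (T x)‖ ≤ ‖T‖ * ‖T x‖ := T.le_opNorm _
          _ = c ^ 2 := by rw [hxT]; ring
      have hns : ‖T (T x) - ((c : ℂ) ^ 2) • x‖ ^ 2 = 0 := by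
        have := @norm_sub_sq ℂ H _ _ _ (T (T x)) (((c : ℂ) ^ 2) • x)
        rw [inner_smul_right, hinner] at this
        have hre : RCLike.re (((c:ℂ)^2) * (‖T x‖ : ℂ) ^ 2) = c ^ 2 * c ^ 2 := by
          rw [hxT]
          simp [← Complex.ofReal_pow, ← Complex.ofReal_mul]
        rw [hre] at this
        have hn2 : ‖((c : ℂ) ^ 2) • x‖ = c ^ 2 := by
          rw [norm_smul, hx1, mul_one]
          simp [← Complex.ofReal_pow, abs_of_nonneg (sq_nonneg c)]
        rw [hn2] at this
        nlinarith [norm_nonneg (T (T x)), sq_nonneg (‖T (T x)‖ - c ^ 2)]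
      have := pow_eq_zero_iff (n := 2) (by norm_num) |>.mp hns
      rw [norm_eq_zero, sub_eq_zero] at this
      exact this
    by_cases h : T x + (c : ℂ) • x = 0
    · right
      refine Module.End.hasEigenvalue_of_hasEigenvector (x := x) ⟨?_, hx0⟩
      rw [Module.End.mem_eigenspace_iff]
      rw [neg_smul]
      exact eq_neg_of_add_eq_zero_left h
    · left
      refine Module.End.hasEigenvalue_of_hasEigenvector (x := T x + (c : ℂ) • x) ⟨?_, h⟩
      rw [Module.End.mem_eigenspace_iff]
      show T (T x + (c : ℂ) • x) = (c : ℂ) • (T x + (c : ℂ) • x)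
      rw [map_add, T.map_smul, hkey, smul_add, smul_smul]
      module
  · rintro (hev | hev) <;>
    · obtain ⟨v, hv, hv0⟩ := hev.exists_hasEigenvector
      rw [Module.End.mem_eigenspace_iff] at hv
      simp only [ContinuousLinearMap.coe_coe] at hv
      refine ⟨((‖v‖⁻¹ : ℝ) : ℂ) • v, ?_, ?_⟩
      · rw [norm_smul]
        simp [norm_ne_zero_iff.mpr hv0]
      · rw [map_smul, hv, smul_comm, norm_smul, norm_smul]
        simp [norm_ne_zero_iff.mpr hv0, abs_of_nonneg (norm_nonneg T)]
end

section
/- A positive bounded operator T on a complex Hilbert space attains its norm on the unit sphere if and only if ‖T‖ is an eigenvalue of T. -/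
open RCLike ContinuousLinearMap

local notation "⟪" x ", " y "⟫" => @inner ℂ _ _ x y

/-- Generalized Cauchy–Schwarz for positive operators. -/
lemma pos_cauchy_schwarz {H : Type*} [NormedAddCommGroup H] [InnerProductSpace ℂ H]
    [CompleteSpace H] (T : H →L[ℂ] H) (hT : T.IsPositive) (x y : H) :
    (re ⟪T x, y⟫) ^ 2 ≤ re ⟪T x, x⟫ * re ⟪T y, y⟫ := by
  have hsymm := hT.1
  have hadj : ∀ u w : H, ⟪T u, w⟫ = ⟪u, T w⟫ := fun u w => hsymm u w
  have hsym : re ⟪T y, x⟫ = re ⟪T x, y⟫ := by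
    rw [hadj y x, inner_re_symm]
  have key : ∀ t : ℝ, 0 ≤ re ⟪T y, y⟫ * (t * t) + (2 * re ⟪T x, y⟫) * t + re ⟪T x, x⟫ := by
    intro t
    have h0 := hT.2 (x + (t : ℂ) • y)
    rw [reApplyInnerSelf_apply] at h0
    have hexp : re ⟪T (x + (t : ℂ) • y), x + (t : ℂ) • y⟫
        = re ⟪T x, x⟫ + t * re ⟪T x, y⟫ + t * re ⟪T y, x⟫
          + t * (t * re ⟪T y, y⟫) := by
      simp only [map_add, map_smul, inner_add_left, inner_add_right, inner_smul_left,
        inner_smul_right, Complex.conj_ofReal, RCLike.re_to_complex, Complex.add_re,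
        Complex.re_ofReal_mul]
      ring
    rw [hexp, hsym] at h0
    nlinarith [h0]
  have hd := discrim_le_zero key
  rw [discrim] at hd
  nlinarith [hd]

theorem positive_norming_iff_eigenvalue {H : Type*}
    [NormedAddCommGroup H] [InnerProductSpace ℂ H] [CompleteSpace H]
    (T : H →L[ℂ] H) (hT : T.IsPositive) :
    (∃ x : H, ‖x‖ = 1 ∧ ‖T x‖ = ‖T‖) ↔
      Module.End.HasEigenvalue (T : H →ₗ[ℂ] H) (‖T‖ : ℂ) := by
  constructor
  · rintro ⟨x, hx1, hxT⟩
    have hx0 : x ≠ 0 := by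
      intro h; rw [h, norm_zero] at hx1; norm_num at hx1
    by_cases hTz : ‖T‖ = 0
    · have : T = 0 := norm_eq_zero.mp hTz
      refine Module.End.hasEigenvalue_of_hasEigenvector ⟨?_, hx0⟩
      simp [this, hTz, Module.End.mem_eigenspace_iff]
    · have hTpos : 0 < ‖T‖ := lt_of_le_of_ne (norm_nonneg T) (Ne.symm hTz)
      have hle : re ⟪T x, x⟫ ≤ ‖T‖ := by
        calc re ⟪T x, x⟫ ≤ ‖⟪T x, x⟫‖ := RCLike.re_le_norm _
          _ ≤ ‖T x‖ * ‖x‖ := norm_inner_le_norm _ _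
          _ = ‖T‖ := by rw [hxT, hx1, mul_one]
      have hge : ‖T‖ ≤ re ⟪T x, x⟫ := by
        have hcs := pos_cauchy_schwarz T hT x (T x)
        have h1 : re ⟪T x, T x⟫ = ‖T x‖ ^ 2 := by
          rw [inner_self_eq_norm_sq]
        have hnn2 : 0 ≤ re ⟪T (T x), T x⟫ := hT.2 (T x)
        have h2 : re ⟪T (T x), T x⟫ ≤ ‖T‖ ^ 3 := by
          calc re ⟪T (T x), T x⟫ ≤ ‖⟪T (T x), T x⟫‖ := RCLike.re_le_norm _
            _ ≤ ‖T (T x)‖ * ‖T x‖ := norm_inner_le_norm _ _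
            _ ≤ (‖T‖ * ‖T x‖) * ‖T x‖ := by
                have := T.le_opNorm (T x)
                nlinarith [norm_nonneg (T x)]
            _ = ‖T‖ ^ 3 := by rw [hxT]; ring
        rw [h1, hxT] at hcs
        have hnn : 0 ≤ re ⟪T x, x⟫ := hT.2 x
        have h3 : ‖T‖ ^ 4 ≤ re ⟪T x, x⟫ * ‖T‖ ^ 3 := by
          calc ‖T‖ ^ 4 = (‖T‖ ^ 2) ^ 2 := by ring
            _ ≤ re ⟪T x, x⟫ * re ⟪T (T x), T x⟫ := hcs
            _ ≤ re ⟪T x, x⟫ * ‖T‖ ^ 3 := mul_le_mul_of_nonneg_left h2 hnn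
        have hp3 : (0:ℝ) < ‖T‖ ^ 3 := pow_pos hTpos 3
        have h4 : ‖T‖ * ‖T‖ ^ 3 ≤ re ⟪T x, x⟫ * ‖T‖ ^ 3 := by nlinarith
        exact le_of_mul_le_mul_right h4 hp3
      have heq : re ⟪T x, x⟫ = ‖T‖ := le_antisymm hle hge
      have hzero : ‖T x - (‖T‖ : ℂ) • x‖ ^ 2 = 0 := by
        rw [norm_sub_sq (𝕜 := ℂ), inner_smul_right]
        have hns : ‖(‖T‖ : ℂ) • x‖ = ‖T‖ := by
          rw [norm_smul, hx1, mul_one, Complex.norm_real, Real.norm_eq_abs,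
            abs_of_nonneg (norm_nonneg T)]
        have hre : re ((‖T‖ : ℂ) * ⟪T x, x⟫) = ‖T‖ * re ⟪T x, x⟫ := by
          simp [RCLike.re_to_complex, Complex.re_ofReal_mul]
        rw [hns, hxT, hre, heq]
        ring
      have heig : T x = (‖T‖ : ℂ) • x := by
        have h5 := pow_eq_zero_iff (n := 2) (by norm_num) |>.mp hzero
        exact sub_eq_zero.mp (norm_eq_zero.mp h5)
      refine Module.End.hasEigenvalue_of_hasEigenvector ⟨?_, hx0⟩
      rw [Module.End.mem_eigenspace_iff]
      exact heig
  · rintro heig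
    obtain ⟨v, hv⟩ := heig.exists_hasEigenvector
    have hv0 : v ≠ 0 := hv.2
    have hvn : ‖v‖ ≠ 0 := norm_ne_zero_iff.mpr hv0
    have hTv : T v = (‖T‖ : ℂ) • v := Module.End.mem_eigenspace_iff.mp hv.1
    refine ⟨((‖v‖ : ℂ))⁻¹ • v, ?_, ?_⟩
    · rw [norm_smul, norm_inv, Complex.norm_real, Real.norm_eq_abs,
        abs_of_nonneg (norm_nonneg v), inv_mul_cancel₀ hvn]
    · rw [map_smul, hTv, smul_comm, norm_smul, norm_smul, norm_inv,
        Complex.norm_real, Complex.norm_real, Real.norm_eq_abs, Real.norm_eq_abs,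
        abs_of_nonneg (norm_nonneg T), abs_of_nonneg (norm_nonneg v),
        inv_mul_cancel₀ hvn, mul_one]
end

section
/- For a bounded operator T between complex Hilbert spaces H and K, T attains its norm on the unit sphere if and only if T*T attains its norm on the unit sphere. -/
open ContinuousLinearMap

theorem norming_iff_adjoint_comp_norming {H K : Type*}
    [NormedAddCommGroup H] [InnerProductSpace ℂ H] [CompleteSpace H]
    [NormedAddCommGroup K] [InnerProductSpace ℂ K] [CompleteSpace K]
    (T : H →L[ℂ] K) :
    (∃ x : H, ‖x‖ = 1 ∧ ‖T x‖ = ‖T‖) ↔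
      (∃ x : H, ‖x‖ = 1 ∧
        ‖(ContinuousLinearMap.adjoint T ∘L T) x‖ = ‖ContinuousLinearMap.adjoint T ∘L T‖) := by
  have hadj : ‖adjoint T‖ = ‖T‖ := LinearIsometryEquiv.norm_map _ T
  constructor
  · rintro ⟨x, hx, hTx⟩
    refine ⟨x, hx, le_antisymm (by simpa [hx] using (adjoint T ∘L T).le_opNorm x) ?_⟩
    have h1 : ‖T x‖ * ‖T x‖ = ‖(inner ℂ ((adjoint T ∘L T) x) x)‖ := by
      rw [ContinuousLinearMap.comp_apply, ContinuousLinearMap.adjoint_inner_left,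
        inner_self_eq_norm_sq_to_K]
      simp [sq, abs_of_nonneg (norm_nonneg (T x))]
    calc ‖adjoint T ∘L T‖ = ‖T‖ * ‖T‖ := T.norm_adjoint_comp_self
      _ = ‖T x‖ * ‖T x‖ := by rw [hTx]
      _ = ‖(inner ℂ ((adjoint T ∘L T) x) x)‖ := h1
      _ ≤ ‖(adjoint T ∘L T) x‖ * ‖x‖ := norm_inner_le_norm _ _
      _ = ‖(adjoint T ∘L T) x‖ := by rw [hx, mul_one]
  · rintro ⟨x, hx, hTx⟩
    refine ⟨x, hx, ?_⟩
    have hle : ‖T x‖ ≤ ‖T‖ := by simpa [hx] using T.le_opNorm x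
    have h2 : ‖T‖ * ‖T‖ ≤ ‖T‖ * ‖T x‖ := by
      calc ‖T‖ * ‖T‖ = ‖adjoint T ∘L T‖ := T.norm_adjoint_comp_self.symm
        _ = ‖(adjoint T) (T x)‖ := hTx.symm
        _ ≤ ‖adjoint T‖ * ‖T x‖ := (adjoint T).le_opNorm _
        _ = ‖T‖ * ‖T x‖ := by rw [hadj]
    rcases eq_or_lt_of_le (norm_nonneg T) with h0 | h0
    · have : ‖T x‖ ≤ 0 := by simpa [← h0] using hle
      linarith [norm_nonneg (T x)]
    · exact le_antisymm hle (le_of_mul_le_mul_left h2 h0)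
end

section
/- For a bounded operator T between complex Hilbert spaces, T attains its norm on the unit sphere if and only if ‖T‖ is an eigenvalue of |T| = √(T*T). -/
theorem norming_iff_norm_eigenvalue_of_absT {H K : Type*}
    [NormedAddCommGroup H] [InnerProductSpace ℂ H] [CompleteSpace H]
    [NormedAddCommGroup K] [InnerProductSpace ℂ K] [CompleteSpace K]
    (T : H →L[ℂ] K) (S : H →L[ℂ] H) (hS : S.IsPositive)
    (hS2 : S ∘L S = ContinuousLinearMap.adjoint T ∘L T) :
    (∃ x : H, ‖x‖ = 1 ∧ ‖T x‖ = ‖T‖) ↔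
      Module.End.HasEigenvalue (S : H →ₗ[ℂ] H) (‖T‖ : ℂ) := by
  have hsymm : (S : H →ₗ[ℂ] H).IsSymmetric :=
    (ContinuousLinearMap.isSelfAdjoint_iff_isSymmetric).mp hS.isSelfAdjoint
  -- key: inner products agree
  have hinner : ∀ x : H, (inner ℂ (S x) (S x) : ℂ) = inner ℂ (T x) (T x) := by
    intro x
    have h1 : (inner ℂ (S x) (S x) : ℂ) = inner ℂ x (S (S x)) := hsymm x (S x)
    have h2 : S (S x) = ContinuousLinearMap.adjoint T (T x) := by
      have := congrArg (fun A : H →L[ℂ] H => A x) hS2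
      simpa using this
    rw [h1, h2, ContinuousLinearMap.adjoint_inner_right]
  have hnorm : ∀ x : H, ‖T x‖ = ‖S x‖ := by
    intro x
    have h := hinner x
    rw [inner_self_eq_norm_sq_to_K, inner_self_eq_norm_sq_to_K] at h
    have h' : ‖S x‖^2 = ‖T x‖^2 := by exact_mod_cast h
    nlinarith [norm_nonneg (T x), norm_nonneg (S x)]
  have hST : ‖S‖ = ‖T‖ := by
    apply le_antisymm
    · exact S.opNorm_le_bound (norm_nonneg T) fun x => (hnorm x) ▸ T.le_opNorm x
    · exact T.opNorm_le_bound (norm_nonneg S) fun x => (hnorm x).symm ▸ S.le_opNorm x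
  constructor
  · rintro ⟨x, hx1, hxT⟩
    have hSx : ‖S x‖ = ‖T‖ := (hnorm x).symm.trans hxT
    have hxne : x ≠ 0 := by
      intro h; rw [h, norm_zero] at hx1; norm_num at hx1
    rcases eq_or_lt_of_le (norm_nonneg T) with h0 | h0
    · -- ‖T‖ = 0
      refine Module.End.hasEigenvalue_of_hasEigenvector ⟨?_, hxne⟩
      rw [Module.End.mem_eigenspace_iff]
      have : S x = 0 := by
        have : ‖S x‖ = 0 := by rw [hSx, ← h0]
        simpa using this
      simp [this, ← h0]
    · -- ‖T‖ > 0
      have hSSx : S (S x) = ((‖T‖ : ℂ)^2) • x := by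
        have hA : (inner ℂ (S (S x)) x : ℂ) = (‖T‖ : ℂ)^2 := by
          have : (inner ℂ (S (S x)) x : ℂ) = inner ℂ (S x) (S x) := (hsymm (S x) x)
          rw [this, inner_self_eq_norm_sq_to_K, hSx]
          norm_cast
        have hb1 : ‖S (S x)‖ ≤ ‖T‖^2 := by
          calc ‖S (S x)‖ ≤ ‖S‖ * ‖S x‖ := S.le_opNorm _
            _ = ‖T‖^2 := by rw [hST, hSx]; ring
        have hb2 : ‖T‖^2 ≤ ‖S (S x)‖ := by
          have := norm_inner_le_norm (𝕜 := ℂ) (S (S x)) x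
          rw [hA, hx1, mul_one] at this
          calc ‖T‖^2 = ‖((‖T‖:ℂ))^2‖ := by
                rw [norm_pow, Complex.norm_real, Real.norm_eq_abs,
                  abs_of_nonneg (norm_nonneg T)]
            _ ≤ ‖S (S x)‖ := this
        have hb : ‖S (S x)‖ = ‖T‖^2 := le_antisymm hb1 hb2
        have heq : (inner ℂ (S (S x)) x : ℂ) = (‖S (S x)‖ : ℂ) * ‖x‖ := by
          rw [hA, hb, hx1]; norm_num
        have := (inner_eq_norm_mul_iff (𝕜 := ℂ)).mp heq
        rw [hx1, hb] at this
        simpa using this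
      set y := S x - (‖T‖ : ℂ) • x with hy
      have hkey : S y + (‖T‖ : ℂ) • y = 0 := by
        rw [hy]
        simp only [map_sub, map_smul, smul_sub, smul_smul, hSSx]
        ring_nf
        module
      have hy0 : y = 0 := by
        by_contra hne
        have h1 : 0 ≤ Complex.re (inner ℂ (S y) y : ℂ) := (Complex.nonneg_iff.mp (hS.inner_nonneg_left y)).1
        have h2 : (inner ℂ (S y + (‖T‖ : ℂ) • y) y : ℂ) = 0 := by rw [hkey, inner_zero_left]
        rw [inner_add_left, inner_smul_left] at h2
        have h3 := congrArg Complex.re h2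
        have h4 : Complex.re ((starRingEnd ℂ) (‖T‖:ℂ) * inner ℂ y y) = ‖T‖ * ‖y‖^2 := by
          simp [Complex.conj_ofReal, inner_self_eq_norm_sq_to_K,
            ← Complex.ofReal_pow, ← Complex.ofReal_mul]
        rw [Complex.add_re, h4, Complex.zero_re] at h3
        have h5 : 0 < ‖T‖ * ‖y‖^2 :=
          mul_pos h0 (pow_pos (norm_pos_iff.mpr hne) 2)
        linarith
      have hSx' : S x = (‖T‖ : ℂ) • x := by
        have := sub_eq_zero.mp hy0
        exact this
      exact Module.End.hasEigenvalue_of_hasEigenvector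
        ⟨Module.End.mem_eigenspace_iff.mpr (by simpa using hSx'), hxne⟩
  · intro h
    obtain ⟨x, hx⟩ := h.exists_hasEigenvector
    obtain ⟨hmem, hxne⟩ := hx
    have hSx : S x = (‖T‖ : ℂ) • x := by
      have := Module.End.mem_eigenspace_iff.mp hmem
      simpa using this
    refine ⟨(‖x‖⁻¹ : ℂ) • x, ?_, ?_⟩
    · have : ‖x‖ ≠ 0 := norm_ne_zero_iff.mpr hxne
      rw [norm_smul]
      simp [this]
    · rw [hnorm, map_smul, hSx, smul_smul, norm_smul]
      have hxn : ‖x‖ ≠ 0 := norm_ne_zero_iff.mpr hxne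
      rw [norm_mul]
      simp [Complex.norm_real, abs_of_nonneg (norm_nonneg T), abs_of_nonneg (norm_nonneg x)]
      field_simp
end

section
/- If T is a positive bounded operator on a complex Hilbert space H that is absolutely norming (its restriction to every nonzero closed subspace attains its norm on that subspace), then H has an orthonormal basis consisting of eigenvectors of T. -/
open scoped InnerProductSpace ComplexConjugate

open Submodule in
/-- Key lemma: a positive operator attaining its norm on an invariant closed submodule
has an eigenvector in it. -/
lemma exists_eigenvector_of_norm_attained {H : Type*}
    [NormedAddCommGroup H] [InnerProductSpace ℂ H] [CompleteSpace H]
    (T : H →L[ℂ] H) (hT : T.IsPositive) (M : Submodule ℂ H)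
    (hinv : ∀ x ∈ M, T x ∈ M) {x : H} (hxM : x ∈ M) (hx : ‖x‖ = 1)
    (hattain : ‖T x‖ = ‖T.comp M.subtypeL‖) :
    ∃ e ∈ M, ‖e‖ = 1 ∧ ∃ μ : ℂ, T e = μ • e := by
  have hsymm : ∀ u v : H, ⟪T u, v⟫_ℂ = ⟪u, T v⟫_ℂ :=
    fun u v => hT.1 u v
  set c : ℝ := ‖T.comp M.subtypeL‖ with hc
  have hx0 : x ≠ 0 := by intro h; rw [h, norm_zero] at hx; norm_num at hx
  rcases eq_or_lt_of_le (norm_nonneg (T x)) with h0 | hpos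
  · exact ⟨x, hxM, hx, 0, by rw [zero_smul]; exact norm_eq_zero.mp h0.symm⟩
  have hTx0 : T x ≠ 0 := fun h => by simp [h] at hpos
  have hcpos : 0 < c := hattain ▸ hpos
  -- ⟪x, T (T x)⟫ = c ^ 2
  have hinner : ⟪x, T (T x)⟫_ℂ = (c : ℂ) ^ 2 := by
    rw [← hsymm x (T x)]
    rw [inner_self_eq_norm_sq_to_K (𝕜 := ℂ), hattain]
    norm_num
  -- ‖T (T x)‖ ≤ c ^ 2
  have hle : ‖T (T x)‖ ≤ c ^ 2 := by
    have h1 : ‖T (T x)‖ ≤ c * ‖T x‖ := by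
      have := (T.comp M.subtypeL).le_opNorm ⟨T x, hinv x hxM⟩
      simpa using this
    calc ‖T (T x)‖ ≤ c * ‖T x‖ := h1
      _ = c ^ 2 := by rw [hattain]; ring
  -- Cauchy–Schwarz equality
  have hTTx0 : T (T x) ≠ 0 := by
    intro h
    rw [h, inner_zero_right] at hinner
    have : (c : ℂ) = 0 := by
      have := hinner.symm
      exact pow_eq_zero_iff (n := 2) (by norm_num) |>.mp this
    exact absurd (Complex.ofReal_eq_zero.mp this) (ne_of_gt hcpos)
  have hCS : ‖⟪x, T (T x)⟫_ℂ‖ = ‖x‖ * ‖T (T x)‖ := by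
    apply le_antisymm (norm_inner_le_norm _ _)
    rw [hinner, hx, one_mul]
    calc ‖T (T x)‖ ≤ c ^ 2 := hle
      _ = ‖((c : ℂ)) ^ 2‖ := by
          rw [norm_pow, Complex.norm_real, Real.norm_eq_abs, abs_of_pos hcpos]
  obtain ⟨r, hr0, hry⟩ := (norm_inner_eq_norm_iff hx0 hTTx0).mp hCS
  -- compute r
  have hr : r = (c : ℂ) ^ 2 := by
    have : ⟪x, T (T x)⟫_ℂ = r := by
      rw [hry, inner_smul_right, inner_self_eq_norm_sq_to_K (𝕜 := ℂ), hx]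
      norm_num
    rw [← this, hinner]
  have hTTx : T (T x) = ((c : ℂ) ^ 2) • x := by rw [hry, hr]
  -- candidate eigenvector
  set y : H := T x + (c : ℂ) • x with hy
  by_cases hy0 : y = 0
  · -- then T x = -c • x, contradicting positivity
    exfalso
    have hTx : T x = -((c : ℂ) • x) := eq_neg_of_add_eq_zero_left hy0
    have h2 := hT.2 x
    rw [ContinuousLinearMap.reApplyInnerSelf_apply, hTx] at h2
    rw [inner_neg_left, inner_smul_left, inner_self_eq_norm_sq_to_K (𝕜 := ℂ), hx] at h2
    simp at h2
    linarith
  · have hyM : y ∈ M := M.add_mem (hinv x hxM) (M.smul_mem _ hxM)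
    have hTy : T y = (c : ℂ) • y := by
      rw [hy, map_add, map_smul, hTTx, smul_add, smul_smul]
      rw [sq]; module
    refine ⟨‖y‖⁻¹ • y, M.smul_mem _ hyM, ?_, (c : ℂ), ?_⟩
    · rw [norm_smul, norm_inv, norm_norm, inv_mul_cancel₀ (norm_ne_zero_iff.mpr hy0)]
    · rw [T.map_smul_of_tower, hTy, smul_comm]

theorem positive_AN_has_eigenbasis {H : Type u}
    [NormedAddCommGroup H] [InnerProductSpace ℂ H] [CompleteSpace H]
    (T : H →L[ℂ] H) (hT : T.IsPositive)
    (hAN : ∀ M : Submodule ℂ H, IsClosed (M : Set H) → M ≠ ⊥ →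
      ∃ x : H, x ∈ M ∧ ‖x‖ = 1 ∧ ‖T x‖ = ‖T.comp M.subtypeL‖) :
    ∃ (ι : Type u) (b : HilbertBasis ι ℂ H), ∀ i : ι, ∃ μ : ℂ, T (b i) = μ • b i := by
  classical
  have hsymm : ∀ u v : H, ⟪T u, v⟫_ℂ = ⟪u, T v⟫_ℂ :=
    fun u v => hT.1 u v
  set 𝒮 : Set (Set H) :=
    {V | Orthonormal ℂ ((↑) : V → H) ∧ ∀ v ∈ V, ∃ μ : ℂ, T v = μ • v} with h𝒮
  obtain ⟨V, hVmem, hVmax⟩ : ∃ V, Maximal (· ∈ 𝒮) V := by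
    apply zorn_subset
    intro c hc hchain
    refine ⟨⋃₀ c, ⟨orthonormal_sUnion_of_directed hchain.directedOn
      (fun s hs => (hc hs).1), ?_⟩, fun s hs => Set.subset_sUnion_of_mem hs⟩
    rintro v ⟨s, hs, hv⟩
    exact (hc hs).2 v hv
  obtain ⟨hVon, hVeig⟩ := hVmem
  set M : Submodule ℂ H := (Submodule.span ℂ V)ᗮ with hM
  have hMbot : M = ⊥ := by
    by_contra hMne
    obtain ⟨x, hxM, hx1, hxat⟩ := hAN M (Submodule.span ℂ V).isClosed_orthogonal hMne
    have hinv : ∀ z ∈ M, T z ∈ M := by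
      intro z hz
      rw [hM, Submodule.mem_orthogonal']
      intro u hu
      have hle : Submodule.span ℂ V ≤ LinearMap.ker ((innerSL ℂ (T z)) : H →ₗ[ℂ] ℂ) := by
        rw [Submodule.span_le]
        intro v hv
        have hzv : ⟪z, v⟫_ℂ = 0 := by
          rw [inner_eq_zero_symm]
          exact hz v (Submodule.subset_span hv)
        obtain ⟨μ, hμ⟩ := hVeig v hv
        simp only [SetLike.mem_coe, LinearMap.mem_ker, ContinuousLinearMap.coe_coe, innerSL_apply_apply]
        rw [hsymm, hμ, inner_smul_right, hzv, mul_zero]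
      have := hle hu
      rwa [LinearMap.mem_ker, ContinuousLinearMap.coe_coe, innerSL_apply_apply] at this
    obtain ⟨e, heM, he1, μ, heig⟩ :=
      exists_eigenvector_of_norm_attained T hT M hinv hxM hx1 hxat
    have he0 : e ≠ 0 := by intro h; rw [h, norm_zero] at he1; norm_num at he1
    have heV : e ∉ V := by
      intro heV
      have : ⟪e, e⟫_ℂ = 0 := heM e (Submodule.subset_span heV)
      exact he0 (inner_self_eq_zero.mp this)
    have hins : insert e V ∈ 𝒮 := by
      constructor
      · rw [orthonormal_iff_ite]
        have hinner : ∀ v ∈ V, ⟪v, e⟫_ℂ = 0 := fun v hv =>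
          heM v (Submodule.subset_span hv)
        rintro ⟨i, hi⟩ ⟨j, hj⟩
        rcases hi with rfl | hi <;> rcases hj with rfl | hj
        · simp [inner_self_eq_norm_sq_to_K (𝕜 := ℂ), he1]
        · have hne : i ≠ j := fun h => heV (h ▸ hj)
          simp [Subtype.mk.injEq, Subtype.ext_iff, hne, inner_eq_zero_symm.mp (hinner j hj)]
        · have hne : i ≠ j := fun h => heV (h ▸ hi)
          simp [Subtype.mk.injEq, Subtype.ext_iff, hne, hinner i hi]
        · have := orthonormal_iff_ite.mp hVon ⟨i, hi⟩ ⟨j, hj⟩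
          simpa [Subtype.mk.injEq, Subtype.ext_iff] using this
      · rintro v (rfl | hv)
        · exact ⟨μ, heig⟩
        · exact hVeig v hv
    have : insert e V = V :=
      subset_antisymm (hVmax hins (Set.subset_insert e V)) (Set.subset_insert e V)
    exact heV (this ▸ Set.mem_insert e V)
  refine ⟨↥V, HilbertBasis.mkOfOrthogonalEqBot hVon ?_, ?_⟩
  · rwa [Subtype.range_coe]
  · intro i
    rw [HilbertBasis.coe_mkOfOrthogonalEqBot]
    exact hVeig i i.2
end

section
/- If T is a positive absolutely norming operator on a complex Hilbert space, diagonalized by an orthonormal basis {v_α}_{α∈Λ} with Tv_α = β_α v_α, then for every nonempty subset Γ ⊆ Λ, the supremum of {β_α : α ∈ Γ} is attained, i.e. sup{β_α : α ∈ Γ} = max{β_α : α ∈ Γ}. -/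
open scoped InnerProductSpace

lemma parseval_aux {H : Type*} {ι : Type*} [NormedAddCommGroup H] [InnerProductSpace ℂ H] [CompleteSpace H]
    (b : HilbertBasis ι ℂ H) (x : H) :
    HasSum (fun i => ‖⟪(b i : H), x⟫_ℂ‖ ^ 2) (‖x‖ ^ 2) := by
  have h := (b.hasSum_inner_mul_inner x x).mapL Complex.reCLM
  have h1 : (fun i => Complex.reCLM (⟪x, (b i : H)⟫_ℂ * ⟪(b i : H), x⟫_ℂ)) = fun i => ‖⟪(b i : H), x⟫_ℂ‖ ^ 2 := by
    funext i
    rw [← inner_conj_symm (b i : H) x, Complex.reCLM_apply, RCLike.mul_conj]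
    simp [← Complex.ofReal_pow, norm_inner_symm x]
  rw [h1] at h
  have h2 : Complex.reCLM ⟪x, x⟫_ℂ = ‖x‖ ^ 2 := by
    simpa using inner_self_eq_norm_sq (𝕜 := ℂ) x
  rwa [h2] at h

theorem positive_AN_sup_eq_max {H : Type*} {ι : Type*}
    [NormedAddCommGroup H] [InnerProductSpace ℂ H] [CompleteSpace H]
    (T : H →L[ℂ] H) (hT : T.IsPositive)
    (hAN : ∀ M : Submodule ℂ H, IsClosed (M : Set H) → M ≠ ⊥ →
      ∃ x : H, x ∈ M ∧ ‖x‖ = 1 ∧ ‖T x‖ = ‖T.comp M.subtypeL‖)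
    (b : HilbertBasis ι ℂ H) (β : ι → ℝ) (hβ : ∀ i, 0 ≤ β i)
    (hb : ∀ i, T (b i) = (β i : ℂ) • b i) :
    ∀ Γ : Set ι, Γ.Nonempty → ∃ i ∈ Γ, ∀ j ∈ Γ, β j ≤ β i := by
  rintro Γ ⟨i₀, hi₀⟩
  classical
  have hbn : ∀ i, ‖(b i : H)‖ = 1 := fun i => b.orthonormal.1 i
  have hTbi : ∀ i, ‖T (b i)‖ = β i := by
    intro i; rw [hb i, norm_smul]
    simp [hbn i, abs_of_nonneg (hβ i)]
  have key : ∀ (x : H) (i : ι), ⟪(b i : H), T x⟫_ℂ = (β i : ℂ) * ⟪(b i : H), x⟫_ℂ := by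
    intro x i
    have h := hT.isSelfAdjoint.isSymmetric (b i : H) x
    simp only [ContinuousLinearMap.coe_coe] at h
    rw [← h, hb i, inner_smul_left]
    simp
  set M : Submodule ℂ H := (Submodule.span ℂ ((fun i => (b i : H)) '' Γ)).topologicalClosure with hM
  have hMc : IsClosed (M : Set H) := Submodule.isClosed_topologicalClosure _
  have memM : ∀ i ∈ Γ, (b i : H) ∈ M := fun i hi =>
    Submodule.le_topologicalClosure _ (Submodule.subset_span ⟨i, hi, rfl⟩)
  have hbne : (b i₀ : H) ≠ 0 := by
    intro h
    have h1 := hbn i₀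
    rw [h, norm_zero] at h1
    norm_num at h1
  have hMne : M ≠ ⊥ := by
    intro hbot
    have h1 := memM i₀ hi₀
    rw [hbot, Submodule.mem_bot] at h1
    exact hbne h1
  have hvanish : ∀ x ∈ M, ∀ i, i ∉ Γ → ⟪(b i : H), x⟫_ℂ = 0 := by
    intro x hx i hi
    have hle : M ≤ (innerSL ℂ (b i : H)).ker := by
      apply Submodule.topologicalClosure_minimal
      · rw [Submodule.span_le]
        rintro _ ⟨j, hj, rfl⟩
        simp only [SetLike.mem_coe, LinearMap.mem_ker, ContinuousLinearMap.coe_coe, innerSL_apply_apply]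
        exact b.orthonormal.2 (fun h : i = j => hi (h ▸ hj))
      · exact ContinuousLinearMap.isClosed_ker (innerSL ℂ (b i : H))
    have := hle hx
    simpa using this
  have hbdd : BddAbove (β '' Γ) := by
    refine ⟨‖T‖, ?_⟩
    rintro _ ⟨j, hj, rfl⟩
    calc β j = ‖T (b j)‖ := (hTbi j).symm
    _ ≤ ‖T‖ * ‖(b j : H)‖ := T.le_opNorm _
    _ = ‖T‖ := by rw [hbn j, mul_one]
  set s : ℝ := sSup (β '' Γ) with hs
  have hle_s : ∀ j ∈ Γ, β j ≤ s := fun j hj => le_csSup hbdd ⟨j, hj, rfl⟩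
  have hs0 : 0 ≤ s := le_trans (hβ i₀) (hle_s i₀ hi₀)
  have hTsum : ∀ x : H, HasSum (fun i => (β i) ^ 2 * ‖⟪(b i : H), x⟫_ℂ‖ ^ 2) (‖T x‖ ^ 2) := by
    intro x
    have h := parseval_aux b (T x)
    have heq : (fun i => ‖⟪(b i : H), T x⟫_ℂ‖ ^ 2)
        = fun i => (β i) ^ 2 * ‖⟪(b i : H), x⟫_ℂ‖ ^ 2 := by
      funext i
      rw [key x i, norm_mul, mul_pow, Complex.norm_real, Real.norm_eq_abs, sq_abs]
    rwa [heq] at h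
  have hbound : ∀ x ∈ M, ‖T x‖ ≤ s * ‖x‖ := by
    intro x hx
    have h1 := hTsum x
    have h2 := (parseval_aux b x).mul_left (s ^ 2)
    have hle : ‖T x‖ ^ 2 ≤ s ^ 2 * ‖x‖ ^ 2 := by
      refine hasSum_le (fun i => ?_) h1 h2
      by_cases hi : i ∈ Γ
      · exact mul_le_mul_of_nonneg_right (pow_le_pow_left₀ (hβ i) (hle_s i hi) 2)
          (by positivity)
      · rw [hvanish x hx i hi]; simp
    nlinarith [norm_nonneg (T x), norm_nonneg x, mul_nonneg hs0 (norm_nonneg x)]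
  set N : ℝ := ‖T.comp M.subtypeL‖ with hNdef
  have hNle : N ≤ s := by
    apply ContinuousLinearMap.opNorm_le_bound _ hs0
    rintro ⟨y, hy⟩
    simp only [ContinuousLinearMap.comp_apply, Submodule.subtypeL_apply, Submodule.coe_norm]
    exact hbound y hy
  have hsle : s ≤ N := by
    refine csSup_le ⟨β i₀, ⟨i₀, hi₀, rfl⟩⟩ ?_
    rintro _ ⟨j, hj, rfl⟩
    have h1 := (T.comp M.subtypeL).le_opNorm (⟨(b j : H), memM j hj⟩ : M)
    simp only [ContinuousLinearMap.comp_apply, Submodule.subtypeL_apply] at h1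
    have h2 : ‖(⟨(b j : H), memM j hj⟩ : M)‖ = 1 := by
      rw [← Submodule.norm_coe]; exact hbn j
    rw [hTbi j] at h1
    rw [h2, mul_one] at h1
    exact h1
  obtain ⟨x, hxM, hx1, hxA⟩ := hAN M hMc hMne
  have hTx : ‖T x‖ = s := by
    refine le_antisymm ?_ ?_
    · have := hbound x hxM
      rwa [hx1, mul_one] at this
    · rw [hxA]; exact hsle
  have h1 : HasSum (fun i => (β i) ^ 2 * ‖⟪(b i : H), x⟫_ℂ‖ ^ 2) (s ^ 2) := by
    rw [← hTx]; exact hTsum x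
  have h2 : HasSum (fun i => s ^ 2 * ‖⟪(b i : H), x⟫_ℂ‖ ^ 2) (s ^ 2) := by
    have := (parseval_aux b x).mul_left (s ^ 2)
    rwa [hx1, one_pow, mul_one] at this
  have hdiff : HasSum (fun i => s ^ 2 * ‖⟪(b i : H), x⟫_ℂ‖ ^ 2
      - (β i) ^ 2 * ‖⟪(b i : H), x⟫_ℂ‖ ^ 2) 0 := by
    simpa using h2.sub h1
  have hnonneg : ∀ i, 0 ≤ s ^ 2 * ‖⟪(b i : H), x⟫_ℂ‖ ^ 2
      - (β i) ^ 2 * ‖⟪(b i : H), x⟫_ℂ‖ ^ 2 := by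
    intro i
    by_cases hi : i ∈ Γ
    · have h3 : (β i) ^ 2 ≤ s ^ 2 := pow_le_pow_left₀ (hβ i) (hle_s i hi) 2
      nlinarith [sq_nonneg ‖⟪(b i : H), x⟫_ℂ‖]
    · rw [hvanish x hxM i hi]; simp
  have hzero : ∀ i, s ^ 2 * ‖⟪(b i : H), x⟫_ℂ‖ ^ 2
      - (β i) ^ 2 * ‖⟪(b i : H), x⟫_ℂ‖ ^ 2 = 0 := by
    intro i
    have hle := hdiff.summable.le_tsum i (fun j _ => hnonneg j)
    rw [hdiff.tsum_eq] at hle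
    exact le_antisymm hle (hnonneg i)
  have hex : ∃ i, ⟪(b i : H), x⟫_ℂ ≠ 0 := by
    by_contra h
    push_neg at h
    have hp := parseval_aux b x
    rw [hx1, one_pow] at hp
    have hfz : (fun i => ‖⟪(b i : H), x⟫_ℂ‖ ^ 2) = fun _ => (0:ℝ) := by
      funext i; rw [h i]; simp
    rw [hfz] at hp
    exact one_ne_zero (hp.unique hasSum_zero)
  obtain ⟨i, hi⟩ := hex
  have hiΓ : i ∈ Γ := by
    by_contra hc
    exact hi (hvanish x hxM i hc)
  have hβi : β i = s := by
    have hz := hzero i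
    have hc : 0 < ‖⟪(b i : H), x⟫_ℂ‖ ^ 2 := pow_pos (norm_pos_iff.mpr hi) 2
    have h4 : s ^ 2 = β i ^ 2 := by nlinarith
    refine le_antisymm (hle_s i hiΓ) ?_
    nlinarith [hβ i, hs0]
  exact ⟨i, hiΓ, fun j hj => (hle_s j hj).trans hβi.ge⟩
end

section
/- If T is a positive absolutely norming operator on a complex Hilbert space, then the set of distinct eigenvalues of T is countable. -/
open scoped ComplexConjugate

local notation "⟪" x ", " y "⟫" => @inner ℂ _ _ x y

/-- Key lemma: a positive AN operator admits no strictly increasing bounded sequence of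
eigenvalues. -/
lemma positive_AN_no_strictMono_eigenvalues {H : Type*}
    [NormedAddCommGroup H] [InnerProductSpace ℂ H] [CompleteSpace H]
    (T : H →L[ℂ] H) (hT : T.IsPositive)
    (hAN : ∀ M : Submodule ℂ H, IsClosed (M : Set H) → M ≠ ⊥ →
      ∃ x : H, x ∈ M ∧ ‖x‖ = 1 ∧ ‖T x‖ = ‖T.comp M.subtypeL‖)
    (μ : ℕ → ℝ) (hmono : StrictMono μ) (hub : BddAbove (Set.range μ))
    (hev : ∀ n, Module.End.HasEigenvalue (T : H →ₗ[ℂ] H) ((μ n : ℂ))) : False := by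
  have hsymm : (T : H →ₗ[ℂ] H).IsSymmetric := fun x y => hT.1 x y
  have hsymm' : ∀ a b : H, ⟪T a, b⟫ = ⟪a, T b⟫ := fun a b => hsymm a b
  -- normalized eigenvectors
  have hvec : ∀ n, ∃ w : H, ‖w‖ = 1 ∧ T w = (μ n : ℂ) • w := by
    intro n
    obtain ⟨w, hw⟩ := (hev n).exists_hasEigenvector
    have hw0 : w ≠ 0 := hw.right
    have happ : T w = (μ n : ℂ) • w := hw.apply_eq_smul
    refine ⟨(‖w‖⁻¹ : ℂ) • w, norm_smul_inv_norm hw0, ?_⟩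
    rw [map_smul, happ, smul_comm]
  choose v hv1 hTv using hvec
  -- eigenvalues are nonnegative
  have hnn : ∀ n, 0 ≤ μ n := by
    intro n
    have h0 := hT.2 (v n)
    have : T.reApplyInnerSelf (v n) = μ n := by
      rw [ContinuousLinearMap.reApplyInnerSelf, hTv, inner_smul_left,
        inner_self_eq_norm_sq_to_K, hv1 n]
      simp [Complex.conj_ofReal]
    rw [this] at h0
    exact h0
  set β : ℝ := ⨆ n, μ n with hβ
  have hle : ∀ n, μ n ≤ β := fun n => le_ciSup hub n
  have hlt : ∀ n, μ n < β := fun n => lt_of_lt_of_le (hmono n.lt_succ_self) (hle (n + 1))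
  have hβ0 : 0 < β := lt_of_le_of_lt (hnn 0) (hlt 0)
  -- the orthonormal family
  have hon : Orthonormal ℂ v := by
    rw [orthonormal_iff_ite]
    intro i j
    by_cases hij : i = j
    · subst hij
      simp [inner_self_eq_norm_sq_to_K, hv1 i]
    · simp only [hij, if_false]
      have h1 : ⟪T (v i), v j⟫ = ⟪v i, T (v j)⟫ := hsymm' _ _
      rw [hTv, hTv, inner_smul_left, inner_smul_right, Complex.conj_ofReal] at h1
      have hμij : (μ i : ℂ) ≠ (μ j : ℂ) := by
        exact_mod_cast fun h => hij (hmono.injective (by exact_mod_cast h))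
      have := sub_eq_zero.mpr h1
      rw [← sub_mul] at this
      rcases mul_eq_zero.mp this with h | h
      · exact absurd (sub_eq_zero.mp h) hμij
      · exact h
  set K : Submodule ℂ H := Submodule.span ℂ (Set.range v) with hK
  set M : Submodule ℂ H := K.topologicalClosure with hM
  have hKM : K ≤ M := K.le_topologicalClosure
  have hMcoe : (M : Set H) = closure (K : Set H) := K.topologicalClosure_coe
  have hvK : ∀ n, v n ∈ K := fun n => Submodule.subset_span ⟨n, rfl⟩
  have hvM : ∀ n, v n ∈ M := fun n => hKM (hvK n)
  have hMclosed : IsClosed (M : Set H) := K.isClosed_topologicalClosure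
  have hMne : M ≠ ⊥ := by
    refine (Submodule.ne_bot_iff M).mpr ⟨v 0, hvM 0, ?_⟩
    intro h
    have h1 := hv1 0
    rw [h, norm_zero] at h1
    exact one_ne_zero h1.symm
  obtain ⟨x, hxM, hx1, hxn⟩ := hAN M hMclosed hMne
  -- ‖T x‖ is at least each eigenvalue
  have hβle : β ≤ ‖T x‖ := by
    refine ciSup_le fun n => ?_
    have h1 : ‖T (v n)‖ = μ n := by
      rw [hTv, norm_smul, hv1]
      simp [abs_of_nonneg (hnn n)]
    have h2 : ‖T.comp M.subtypeL (⟨v n, hvM n⟩ : M)‖ ≤ ‖T.comp M.subtypeL‖ * ‖(⟨v n, hvM n⟩ : M)‖ :=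
      (T.comp M.subtypeL).le_opNorm _
    have h3 : ‖(⟨v n, hvM n⟩ : M)‖ = 1 := hv1 n
    have h4 : T.comp M.subtypeL (⟨v n, hvM n⟩ : M) = T (v n) := rfl
    rw [h3, mul_one, h4, h1] at h2
    rw [hxn]
    exact h2
  -- norm bound on M : for y ∈ M, ‖T y‖ ≤ β * ‖y‖
  have hbound : ∀ y ∈ M, ‖T y‖ ≤ β * ‖y‖ := by
    have hCclosed : IsClosed {y : H | ‖T y‖ ≤ β * ‖y‖} := by
      apply isClosed_le
      · exact (T.continuous.norm)
      · exact (continuous_const.mul continuous_norm)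
    have hKC : (K : Set H) ⊆ {y : H | ‖T y‖ ≤ β * ‖y‖} := by
      intro y hy
      obtain ⟨c, rfl⟩ := Finsupp.mem_span_range_iff_exists_finsupp.mp hy
      have hysum : (c.sum fun i a => a • v i) = ∑ i ∈ c.support, c i • v i := rfl
      have hTy : T (c.sum fun i a => a • v i) = ∑ i ∈ c.support, (c i * (μ i : ℂ)) • v i := by
        rw [hysum, map_sum]
        refine Finset.sum_congr rfl fun i _ => ?_
        rw [map_smul, hTv, smul_smul]
      have hny : ‖(c.sum fun i a => a • v i)‖ ^ 2 = ∑ i ∈ c.support, ‖c i‖ ^ 2 := by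
        rw [← inner_self_eq_norm_sq (𝕜 := ℂ), hysum, hon.inner_sum, map_sum]
        refine Finset.sum_congr rfl fun i _ => ?_
        rw [RCLike.conj_mul, ← RCLike.ofReal_pow, RCLike.ofReal_re]
      have hnTy : ‖T (c.sum fun i a => a • v i)‖ ^ 2
          = ∑ i ∈ c.support, ‖c i‖ ^ 2 * (μ i) ^ 2 := by
        rw [← inner_self_eq_norm_sq (𝕜 := ℂ), hTy, hon.inner_sum, map_sum]
        refine Finset.sum_congr rfl fun i _ => ?_
        rw [RCLike.conj_mul, ← RCLike.ofReal_pow, RCLike.ofReal_re, norm_mul, mul_pow,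
          Complex.norm_real, Real.norm_eq_abs, sq_abs]
      have hsq : ‖T (c.sum fun i a => a • v i)‖ ^ 2 ≤ (β * ‖(c.sum fun i a => a • v i)‖) ^ 2 := by
        rw [hnTy, mul_pow, hny, Finset.mul_sum]
        refine Finset.sum_le_sum fun i _ => ?_
        rw [mul_comm (β ^ 2) _]
        refine mul_le_mul_of_nonneg_left ?_ (sq_nonneg _)
        exact pow_le_pow_left₀ (hnn i) (le_of_lt (hlt i)) 2
      have h0 : (0 : ℝ) ≤ β * ‖(c.sum fun i a => a • v i)‖ :=
        mul_nonneg hβ0.le (norm_nonneg _)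
      exact le_of_sq_le_sq hsq h0
    intro y hy
    have : y ∈ closure (K : Set H) := by rw [← hMcoe]; exact hy
    exact closure_minimal hKC hCclosed this
  -- the norm is attained exactly at β
  have heq : ‖T x‖ = β := by
    refine le_antisymm ?_ hβle
    have := hbound x hxM
    rwa [hx1, mul_one] at this
  -- T maps M into M
  have hTK : ∀ y ∈ K, T y ∈ K := by
    intro y hy
    refine Submodule.span_induction (p := fun z _ => T z ∈ K) ?_ ?_ ?_ ?_ hy
    · rintro z ⟨n, rfl⟩
      rw [hTv]
      exact K.smul_mem _ (hvK n)
    · simp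
    · intro a b _ _ ha hb
      rw [map_add]; exact K.add_mem ha hb
    · intro a z _ hz
      rw [map_smul]; exact K.smul_mem _ hz
  have hTM : ∀ y ∈ M, T y ∈ M := by
    intro y hy
    have h1 : T y ∈ T '' closure (K : Set H) := ⟨y, by rw [← hMcoe]; exact hy, rfl⟩
    have h2 : T '' closure (K : Set H) ⊆ closure (T '' (K : Set H)) :=
      image_closure_subset_closure_image T.continuous
    have h3 : T '' (K : Set H) ⊆ (K : Set H) := by
      rintro _ ⟨z, hz, rfl⟩; exact hTK z hz
    have : T y ∈ closure (K : Set H) := closure_mono h3 (h2 h1)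
    rw [← hMcoe] at this
    exact this
  -- the operator S = β² - T²
  set c2 : ℂ := ((β ^ 2 : ℝ) : ℂ) with hc2
  set Sop : H → H := fun y => c2 • y - T (T y) with hSop
  have hSopM : ∀ y ∈ M, Sop y ∈ M := fun y hy =>
    M.sub_mem (M.smul_mem _ hy) (hTM _ (hTM _ hy))
  have hSinner : ∀ y : H, ⟪y, Sop y⟫ = c2 * (‖y‖ : ℂ) ^ 2 - (‖T y‖ : ℂ) ^ 2 := by
    intro y
    rw [hSop]
    simp only [inner_sub_right, inner_smul_right]
    rw [← hsymm' y (T y), inner_self_eq_norm_sq_to_K, inner_self_eq_norm_sq_to_K]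
    norm_cast
  have hSpos : ∀ y ∈ M, 0 ≤ (⟪y, Sop y⟫).re := by
    intro y hy
    have hb := hbound y hy
    have hsq : ‖T y‖ ^ 2 ≤ β ^ 2 * ‖y‖ ^ 2 := by
      rw [← mul_pow]
      exact pow_le_pow_left₀ (norm_nonneg _) hb 2
    rw [hSinner]
    have hcast : c2 * ((‖y‖ : ℂ)) ^ 2 - ((‖T y‖ : ℂ)) ^ 2
        = ((β ^ 2 * ‖y‖ ^ 2 - ‖T y‖ ^ 2 : ℝ) : ℂ) := by
      rw [hc2]; push_cast; ring
    rw [hcast, Complex.ofReal_re]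
    linarith
  -- symmetry of S
  have hSsym : ∀ a b : H, ⟪Sop a, b⟫ = ⟪a, Sop b⟫ := by
    intro a b
    rw [hSop]
    simp only [inner_sub_left, inner_sub_right, inner_smul_left, inner_smul_right]
    rw [hc2, Complex.conj_ofReal, hsymm' (T a) b, hsymm' a (T b)]
  -- ⟪x, Sop x⟫ = 0
  have hx0 : ⟪x, Sop x⟫ = 0 := by
    rw [hSinner, hx1, heq, hc2]
    push_cast
    ring
  -- orthogonality: ⟪u, Sop x⟫ = 0 for all u ∈ M
  have horth : ∀ u ∈ M, ⟪u, Sop x⟫ = 0 := by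
    have hre : ∀ u ∈ M, (⟪u, Sop x⟫).re = 0 := by
      intro u hu
      set a : ℝ := (⟪u, Sop x⟫).re with ha
      set b : ℝ := (⟪u, Sop u⟫).re with hb
      have hbnn : 0 ≤ b := hSpos u hu
      have key : ∀ t : ℝ, 0 ≤ 2 * t * a + t ^ 2 * b := by
        intro t
        have hmem : x + (t : ℂ) • u ∈ M := M.add_mem hxM (M.smul_mem _ hu)
        have h0 := hSpos _ hmem
        have hexp : ⟪x + (t : ℂ) • u, Sop (x + (t : ℂ) • u)⟫
            = ⟪x, Sop x⟫ + (t : ℂ) * (⟪x, Sop u⟫ + ⟪u, Sop x⟫)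
              + (t : ℂ) ^ 2 * ⟪u, Sop u⟫ := by
          have hSadd : Sop (x + (t : ℂ) • u) = Sop x + (t : ℂ) • Sop u := by
            rw [hSop]
            simp only [map_add, map_smul, smul_add, smul_sub]
            module
          rw [hSadd]
          simp only [inner_add_left, inner_add_right, inner_smul_left, inner_smul_right,
            Complex.conj_ofReal]
          ring
        have hconj : ⟪x, Sop u⟫ = conj ⟪u, Sop x⟫ := by
          rw [← hSsym x u, ← inner_conj_symm]
        have hreeq : (⟪x, Sop u⟫ + ⟪u, Sop x⟫).re = 2 * a := by
          rw [hconj, Complex.add_re, Complex.conj_re, ha]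
          ring
        have h1 : ((t : ℂ) * (⟪x, Sop u⟫ + ⟪u, Sop x⟫)).re = t * (2 * a) := by
          rw [Complex.mul_re, hreeq]
          simp
        have h2 : ((t : ℂ) ^ 2 * ⟪u, Sop u⟫).re = t ^ 2 * b := by
          have hcast : ((t : ℂ) ^ 2) = ((t ^ 2 : ℝ) : ℂ) := by push_cast; ring
          rw [hcast, Complex.mul_re, Complex.ofReal_re, Complex.ofReal_im, hb]
          ring
        rw [hexp, hx0, zero_add, Complex.add_re, h1, h2] at h0
        nlinarith
      by_contra hane
      have hb1 : (0 : ℝ) < b + 1 := by linarith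
      have ht := key (-(a / (b + 1)))
      have ha2 : 0 < a ^ 2 := by positivity
      have hkey : 2 * (-(a / (b + 1))) * a + (-(a / (b + 1))) ^ 2 * b
          = (-(a ^ 2) * (b + 2)) / (b + 1) ^ 2 := by
        field_simp
        ring
      rw [hkey] at ht
      have hnum : -(a ^ 2) * (b + 2) < 0 := by nlinarith
      have : (-(a ^ 2) * (b + 2)) / (b + 1) ^ 2 < 0 := div_neg_of_neg_of_pos hnum (by positivity)
      linarith
    intro u hu
    have h1 : (⟪u, Sop x⟫).re = 0 := hre u hu
    have h2 : (⟪u, Sop x⟫).im = 0 := by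
      have hiu : (Complex.I) • u ∈ M := M.smul_mem _ hu
      have := hre _ hiu
      rw [inner_smul_left] at this
      simp only [Complex.conj_I] at this
      rw [Complex.mul_re] at this
      simp at this
      exact this
    exact Complex.ext h1 h2
  -- hence Sop x = 0, i.e. T (T x) = β² x
  have hSx : Sop x = 0 := by
    have := horth (Sop x) (hSopM x hxM)
    exact inner_self_eq_zero.mp this
  have hTTx : T (T x) = c2 • x := by
    have h' : c2 • x - T (T x) = 0 := hSx
    exact (sub_eq_zero.mp h').symm
  -- x is orthogonal to each v n
  have hvx : ∀ n, ⟪v n, x⟫ = 0 := by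
    intro n
    have h1 : ⟪v n, T (T x)⟫ = ((μ n : ℂ)) ^ 2 * ⟪v n, x⟫ := by
      rw [← hsymm' (v n) (T x), ← hsymm' (T (v n)) x, hTv, map_smul, hTv, smul_smul,
        inner_smul_left]
      rw [← Complex.ofReal_mul, Complex.conj_ofReal]
      push_cast
      ring
    have h2 : ⟪v n, T (T x)⟫ = c2 * ⟪v n, x⟫ := by
      rw [hTTx, inner_smul_right]
    rw [h1] at h2
    have hne : ((μ n : ℂ)) ^ 2 ≠ c2 := by
      rw [hc2]
      intro h
      have h' : ((μ n) ^ 2 : ℝ) = β ^ 2 := by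
        push_cast at h
        exact_mod_cast h
      nlinarith [hnn n, hlt n]
    by_contra hvxne
    have := sub_eq_zero.mpr h2
    rw [← sub_mul] at this
    rcases mul_eq_zero.mp this with h | h
    · exact hne (sub_eq_zero.mp h)
    · exact hvxne h
  -- hence x is orthogonal to M, so x = 0, contradiction
  have hxx : ⟪x, x⟫ = 0 := by
    have hCclosed : IsClosed {y : H | ⟪y, x⟫ = 0} := by
      have : Continuous fun y : H => ⟪y, x⟫ := Continuous.inner continuous_id continuous_const
      exact isClosed_eq this continuous_const
    have hKC : (K : Set H) ⊆ {y : H | ⟪y, x⟫ = 0} := by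
      intro y hy
      refine Submodule.span_induction (p := fun z _ => ⟪z, x⟫ = 0) ?_ ?_ ?_ ?_ hy
      · rintro z ⟨n, rfl⟩; exact hvx n
      · simp
      · intro a b _ _ ha hb
        rw [inner_add_left, ha, hb, add_zero]
      · intro a z _ hz
        rw [inner_smul_left, hz, mul_zero]
    have : x ∈ closure (K : Set H) := by rw [← hMcoe]; exact hxM
    exact closure_minimal hKC hCclosed this
  have : x = 0 := inner_self_eq_zero.mp hxx
  rw [this] at hx1
  simp at hx1

theorem positive_AN_countable_eigenvalues {H : Type*}
    [NormedAddCommGroup H] [InnerProductSpace ℂ H] [CompleteSpace H]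
    (T : H →L[ℂ] H) (hT : T.IsPositive)
    (hAN : ∀ M : Submodule ℂ H, IsClosed (M : Set H) → M ≠ ⊥ →
      ∃ x : H, x ∈ M ∧ ‖x‖ = 1 ∧ ‖T x‖ = ‖T.comp M.subtypeL‖) :
    Set.Countable {μ : ℂ | Module.End.HasEigenvalue (T : H →ₗ[ℂ] H) μ} := by
  have hsymm : (T : H →ₗ[ℂ] H).IsSymmetric := fun x y => hT.1 x y
  set Sr : Set ℝ := {r : ℝ | Module.End.HasEigenvalue (T : H →ₗ[ℂ] H) ((r : ℂ))} with hSr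
  -- each element of Sr is isolated from below within Sr
  have key : ∀ r ∈ Sr, ∃ q : ℚ, (q : ℝ) < r ∧ ∀ r' ∈ Sr, r' ≤ (q : ℝ) ∨ r ≤ r' := by
    intro r hr
    by_contra hcon
    push_neg at hcon
    -- we can find eigenvalues arbitrarily close below r
    have hdense : ∀ s : ℝ, s < r → ∃ t, t ∈ Sr ∧ s < t ∧ t < r := by
      intro s hs
      obtain ⟨q, hq1, hq2⟩ := exists_rat_btwn hs
      obtain ⟨r', hr'S, hr'1, hr'2⟩ := hcon q hq2
      exact ⟨r', hr'S, hq1.trans hr'1, hr'2⟩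
    -- build a strictly increasing sequence of eigenvalues below r
    obtain ⟨t0, ht0S, _, ht0r⟩ := hdense (r - 1) (by linarith)
    let g : {s : ℝ // s ∈ Sr ∧ s < r} → {s : ℝ // s ∈ Sr ∧ s < r} := fun s =>
      ⟨(hdense s.1 s.2.2).choose, (hdense s.1 s.2.2).choose_spec.1,
        (hdense s.1 s.2.2).choose_spec.2.2⟩
    have hg : ∀ s, s.1 < (g s).1 := fun s => (hdense s.1 s.2.2).choose_spec.2.1
    let seq : ℕ → {s : ℝ // s ∈ Sr ∧ s < r} := fun n => g^[n] ⟨t0, ht0S, ht0r⟩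
    have hseq_succ : ∀ n, seq (n + 1) = g (seq n) := fun n =>
      Function.iterate_succ_apply' g n _
    have hmono : StrictMono (fun n => (seq n).1) := by
      apply strictMono_nat_of_lt_succ
      intro n
      rw [hseq_succ]
      exact hg (seq n)
    have hub : BddAbove (Set.range fun n => (seq n).1) := by
      refine ⟨r, ?_⟩
      rintro _ ⟨n, rfl⟩
      exact (seq n).2.2.le
    exact positive_AN_no_strictMono_eigenvalues T hT hAN _ hmono hub fun n => (seq n).2.1
  -- countability of Sr via an injection into ℚ
  have hSrCount : Sr.Countable := by
    classical
    choose! f hf1 hf2 using key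
    have hinj : Set.InjOn f Sr := by
      intro r1 h1 r2 h2 hf
      by_contra hne
      rcases lt_or_gt_of_ne hne with h | h
      · rcases hf2 r2 h2 r1 h1 with hc | hc
        · have := hf1 r1 h1; rw [hf] at this; linarith
        · linarith
      · rcases hf2 r1 h1 r2 h2 with hc | hc
        · have := hf1 r2 h2; rw [← hf] at this; linarith
        · linarith
    exact Set.MapsTo.countable_of_injOn (Set.mapsTo_image f Sr) hinj (Set.to_countable _)
  -- every eigenvalue is real
  have hsub : {μ : ℂ | Module.End.HasEigenvalue (T : H →ₗ[ℂ] H) μ}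
      ⊆ (fun r : ℝ => (r : ℂ)) '' Sr := by
    intro μ hμ
    have hreal : conj μ = μ := hsymm.conj_eigenvalue_eq_self hμ
    obtain ⟨r, hr⟩ := Complex.conj_eq_iff_real.mp hreal
    exact ⟨r, by rw [hSr]; simpa [← hr] using hμ, hr.symm⟩
  exact Set.Countable.mono hsub (hSrCount.image _)
end

section
/- If T is a positive absolutely norming operator on a complex Hilbert space, then T has at most one eigenvalue of infinite multiplicity (i.e., at most one eigenvalue whose eigenspace is infinite dimensional). -/
open Module.End Submodule Filter Topology
open scoped InnerProductSpace

section ANHelpers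
variable {H : Type*} [NormedAddCommGroup H] [InnerProductSpace ℂ H] [CompleteSpace H]

lemma eig_isClosed (T : H →L[ℂ] H) (μ : ℂ) :
    IsClosed ((eigenspace (T : H →ₗ[ℂ] H) μ : Submodule ℂ H) : Set H) := by
  have h : (eigenspace (T : H →ₗ[ℂ] H) μ : Set H)
      = (LinearMap.ker ((T - μ • (1 : H →L[ℂ] H) : H →L[ℂ] H) : H →ₗ[ℂ] H) : Set H) := by
    ext x
    simp only [SetLike.mem_coe, mem_eigenspace_iff, LinearMap.mem_ker]
    simp [sub_eq_zero]
  rw [h]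
  exact ContinuousLinearMap.isClosed_ker (T - μ • (1 : H →L[ℂ] H))

lemma exists_on_seq (E : Submodule ℂ H) (hE : IsClosed (E : Set H))
    (hinf : ¬ FiniteDimensional ℂ E) :
    ∃ u : ℕ → H, Orthonormal ℂ u ∧ ∀ n, u n ∈ E := by
  haveI : CompleteSpace E := hE.completeSpace_coe
  obtain ⟨w, b, hb⟩ := exists_hilbertBasis ℂ E
  have hwinf : w.Infinite := by
    by_contra hfin
    rw [Set.not_infinite] at hfin
    apply hinf
    have h1 : FiniteDimensional ℂ (span ℂ w : Submodule ℂ E) :=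
      FiniteDimensional.span_of_finite ℂ hfin
    have h2 : (span ℂ w).topologicalClosure = (⊤ : Submodule ℂ E) := by
      have := b.dense_span
      rwa [hb, Subtype.range_coe] at this
    rw [(Submodule.closed_of_finiteDimensional _).submodule_topologicalClosure_eq] at h2
    rw [h2] at h1
    exact Submodule.topEquiv.finiteDimensional
  haveI := hwinf.to_subtype
  set f := Infinite.natEmbedding w with hf
  refine ⟨fun n => ((b (f n) : E) : H), ?_, fun n => (b (f n)).2⟩
  exact ((b.orthonormal.comp_linearIsometry E.subtypeₗᵢ).comp f f.injective)


lemma eig_real_nonneg (T : H →L[ℂ] H) (hT : T.IsPositive) {μ : ℂ}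
    (hμ : HasEigenvalue (T : H →ₗ[ℂ] H) μ) : μ.im = 0 ∧ 0 ≤ μ.re := by
  have hsym : (T : H →ₗ[ℂ] H).IsSymmetric := hT.1
  have hconj := hsym.conj_eigenvalue_eq_self hμ
  have him : μ.im = 0 := by
    have := congrArg Complex.im hconj
    simp only [Complex.conj_im] at this
    linarith
  refine ⟨him, ?_⟩
  obtain ⟨v, hv, hv0⟩ := hμ.exists_hasEigenvector
  have hTv : T v = μ • v := mem_eigenspace_iff.mp hv
  have h1 : (0:ℝ) ≤ T.reApplyInnerSelf v := hT.2 v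
  rw [ContinuousLinearMap.reApplyInnerSelf_apply] at h1
  rw [hTv, inner_smul_left, inner_self_eq_norm_sq_to_K, hconj] at h1
  have hnorm : (0:ℝ) < ‖v‖ := norm_pos_iff.mpr hv0
  simp only [← RCLike.ofReal_pow, RCLike.mul_re, RCLike.ofReal_re, RCLike.ofReal_im,
    mul_zero, sub_zero] at h1
  have : RCLike.re μ = μ.re := rfl
  rw [this] at h1
  nlinarith [pow_pos hnorm 2]


set_option maxHeartbeats 1000000 in
lemma core (T : H →L[ℂ] H) (hT : T.IsPositive)
    (hAN : ∀ M : Submodule ℂ H, IsClosed (M : Set H) → M ≠ ⊥ →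
      ∃ x : H, x ∈ M ∧ ‖x‖ = 1 ∧ ‖T x‖ = ‖T.comp M.subtypeL‖)
    {μr νr : ℝ} (hμ0 : 0 ≤ μr) (hlt : μr < νr)
    (hμinf : ¬ FiniteDimensional ℂ (eigenspace (T : H →ₗ[ℂ] H) (μr:ℂ)))
    (hνinf : ¬ FiniteDimensional ℂ (eigenspace (T : H →ₗ[ℂ] H) (νr:ℂ))) : False := by
  classical
  have hν0 : 0 < νr := lt_of_le_of_lt hμ0 hlt
  set Eμ : Submodule ℂ H := eigenspace (T : H →ₗ[ℂ] H) (μr:ℂ) with hEμ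
  set Eν : Submodule ℂ H := eigenspace (T : H →ₗ[ℂ] H) (νr:ℂ) with hEν
  have hEμc : IsClosed (Eμ : Set H) := eig_isClosed T _
  have hEνc : IsClosed (Eν : Set H) := eig_isClosed T _
  obtain ⟨u, hu, humem⟩ := exists_on_seq Eμ hEμc hμinf
  obtain ⟨v, hv, hvmem⟩ := exists_on_seq Eν hEνc hνinf
  have hsym : (T : H →ₗ[ℂ] H).IsSymmetric := hT.1
  have hne : (μr:ℂ) ≠ (νr:ℂ) := by exact_mod_cast ne_of_lt hlt
  -- orthogonality of the two eigenspaces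
  have horth : ∀ p ∈ Eμ, ∀ q ∈ Eν, ⟪p, q⟫_ℂ = 0 := by
    intro p hp q hq
    exact hsym.orthogonalFamily_eigenspaces hne ⟨p, hp⟩ ⟨q, hq⟩
  have horth' : ∀ q ∈ Eν, ∀ p ∈ Eμ, ⟪q, p⟫_ℂ = 0 := by
    intro q hq p hp
    exact hsym.orthogonalFamily_eigenspaces hne.symm ⟨q, hq⟩ ⟨p, hp⟩
  -- the weights
  set s : ℕ → ℝ := fun n => 1 / (n + 2) with hs
  have hs0 : ∀ n, 0 < s n := fun n => by positivity
  have hs1 : ∀ n, s n < 1 := by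
    intro n
    rw [hs]
    simp only [one_div]
    rw [inv_lt_one_iff₀]
    right
    have : (0:ℝ) ≤ n := Nat.cast_nonneg n
    linarith
  set a : ℕ → ℝ := fun n => Real.sqrt (s n) with ha
  set bc : ℕ → ℝ := fun n => Real.sqrt (1 - s n) with hbc
  have ha2 : ∀ n, a n ^ 2 = s n := fun n => Real.sq_sqrt (hs0 n).le
  have hb2 : ∀ n, bc n ^ 2 = 1 - s n := fun n => Real.sq_sqrt (by linarith [hs1 n])
  have ha0 : ∀ n, 0 < a n := fun n => Real.sqrt_pos.mpr (hs0 n)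
  have hb0 : ∀ n, 0 ≤ bc n := fun n => Real.sqrt_nonneg _
  set w : ℕ → H := fun n => (a n : ℂ) • u n + (bc n : ℂ) • v n with hw
  -- orthonormality of w
  have huv0 : ∀ m n, ⟪u m, v n⟫_ℂ = 0 := fun m n => horth _ (humem m) _ (hvmem n)
  have hvu0 : ∀ m n, ⟪v m, u n⟫_ℂ = 0 := fun m n => horth' _ (hvmem m) _ (humem n)
  have huu := orthonormal_iff_ite.mp hu
  have hvv := orthonormal_iff_ite.mp hv
  have honw : Orthonormal ℂ w := by
    rw [orthonormal_iff_ite]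
    intro m n
    simp only [hw, inner_add_left, inner_add_right, inner_smul_left, inner_smul_right,
      Complex.conj_ofReal, huv0, hvu0, huu, hvv, mul_zero, add_zero, zero_add]
    by_cases hmn : m = n
    · subst hmn
      have h1 : (a m : ℂ) * a m + (bc m : ℂ) * bc m = ((a m ^ 2 + bc m ^ 2 : ℝ) : ℂ) := by
        push_cast; ring
      simp only [if_true, eq_self_iff_true, mul_one]
      rw [h1, ha2, hb2]
      norm_num
    · simp [if_neg hmn]
  -- the subspace M
  set M : Submodule ℂ H := (span ℂ (Set.range w)).topologicalClosure with hM
  have hMclosed : IsClosed (M : Set H) := Submodule.isClosed_topologicalClosure _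
  have hwM : ∀ n, w n ∈ M := fun n =>
    Submodule.le_topologicalClosure _ (subset_span (Set.mem_range_self n))
  have hwnorm : ∀ n, ‖w n‖ = 1 := fun n => honw.1 n
  have hMne : M ≠ ⊥ := by
    rw [Submodule.ne_bot_iff]
    refine ⟨w 0, hwM 0, ?_⟩
    intro h
    have := hwnorm 0
    rw [h] at this
    simpa using this
  obtain ⟨x, hxM, hxnorm, hxattain⟩ := hAN M hMclosed hMne
  -- each ‖T (w n)‖ ≤ ‖T x‖
  have hbound : ∀ n, ‖T (w n)‖ ≤ ‖T x‖ := by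
    intro n
    rw [hxattain]
    have h1 : T (w n) = (T.comp M.subtypeL) ⟨w n, hwM n⟩ := rfl
    rw [h1]
    calc ‖(T.comp M.subtypeL) ⟨w n, hwM n⟩‖
        ≤ ‖T.comp M.subtypeL‖ * ‖(⟨w n, hwM n⟩ : M)‖ := (T.comp M.subtypeL).le_opNorm _
      _ = ‖T.comp M.subtypeL‖ := by
          rw [show ‖(⟨w n, hwM n⟩ : M)‖ = ‖w n‖ from rfl, hwnorm n, mul_one]
  -- T on w n
  have hTu : ∀ n, T (u n) = (μr : ℂ) • u n := fun n => mem_eigenspace_iff.mp (humem n)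
  have hTv : ∀ n, T (v n) = (νr : ℂ) • v n := fun n => mem_eigenspace_iff.mp (hvmem n)
  have hTw : ∀ n, T (w n) = ((a n : ℂ) * (μr:ℂ)) • u n + ((bc n : ℂ) * (νr:ℂ)) • v n := by
    intro n
    rw [hw]
    simp only [map_add, map_smul, hTu, hTv, smul_smul]
  have hnormsq : ∀ (c d : ℂ) (x1 y1 : H), ⟪x1, y1⟫_ℂ = 0 → ‖x1‖ = 1 → ‖y1‖ = 1 →
      ‖c • x1 + d • y1‖ ^ 2 = ‖c‖ ^ 2 + ‖d‖ ^ 2 := by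
    intro c d x1 y1 hxy hx hy
    rw [pow_two, norm_add_sq_eq_norm_sq_add_norm_sq_of_inner_eq_zero (𝕜 := ℂ) _ _ (by
      rw [inner_smul_left, inner_smul_right, hxy]; ring), norm_smul, norm_smul, hx, hy]
    ring
  have hTwnorm : ∀ n, ‖T (w n)‖ ^ 2 = μr ^ 2 * s n + νr ^ 2 * (1 - s n) := by
    intro n
    rw [hTw n, hnormsq _ _ _ _ (huv0 n n) (hu.1 n) (hv.1 n)]
    rw [norm_mul, norm_mul]
    simp only [Complex.norm_real, Real.norm_eq_abs]
    rw [abs_of_nonneg (ha0 n).le, abs_of_nonneg hμ0, abs_of_nonneg (hb0 n), abs_of_nonneg hν0.le,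
      mul_pow, mul_pow, ha2, hb2]
    ring
  -- limit
  have hslim : Tendsto s atTop (𝓝 0) := by
    have h2 := (tendsto_one_div_add_atTop_nhds_zero_nat (𝕜 := ℝ)).comp (tendsto_add_atTop_nat 1)
    have he : s = (fun n : ℕ => 1 / ((n:ℝ) + 1)) ∘ (fun n : ℕ => n + 1) := by
      funext n
      simp only [Function.comp_apply, hs]
      push_cast
      ring_nf
    rw [he]
    exact h2
  have hglim : Tendsto (fun n => μr ^ 2 * s n + νr ^ 2 * (1 - s n)) atTop (𝓝 (νr ^ 2)) := by
    have h3 := ((tendsto_const_nhds (x := μr ^ 2)).mul hslim).add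
      ((tendsto_const_nhds (x := νr ^ 2)).mul ((tendsto_const_nhds (x := (1:ℝ))).sub hslim))
    simpa using h3
  have hTwlim : Tendsto (fun n => ‖T (w n)‖) atTop (𝓝 νr) := by
    have h1 : (fun n => ‖T (w n)‖) = fun n => Real.sqrt (μr^2 * s n + νr^2*(1-s n)) := by
      funext n
      rw [← hTwnorm n, Real.sqrt_sq (norm_nonneg _)]
    rw [h1]
    have h4 := (Real.continuous_sqrt.tendsto _).comp hglim
    simpa [Function.comp_def, Real.sqrt_sq hν0.le] using h4
  have hνle : νr ≤ ‖T x‖ := le_of_tendsto hTwlim (Eventually.of_forall hbound)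
  -- decomposition of x
  haveI : CompleteSpace Eν := hEνc.completeSpace_coe
  set P := orthogonalProjection Eν with hP
  have hxclos : x ∈ closure ((Eμ ⊔ Eν : Submodule ℂ H) : Set H) := by
    have hle : span ℂ (Set.range w) ≤ Eμ ⊔ Eν := by
      rw [span_le]
      rintro _ ⟨n, rfl⟩
      exact add_mem (mem_sup_left (smul_mem _ _ (humem n)))
        (mem_sup_right (smul_mem _ _ (hvmem n)))
    have h2 : M ≤ (Eμ ⊔ Eν).topologicalClosure := Submodule.topologicalClosure_mono hle
    have h3 := h2 hxM
    rwa [← SetLike.mem_coe, Submodule.topologicalClosure_coe] at h3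
  have hsub : ∀ y ∈ (Eμ ⊔ Eν : Submodule ℂ H), y - (P y : H) ∈ Eμ := by
    intro y hy
    obtain ⟨c, hc, d, hd, rfl⟩ := mem_sup.mp hy
    have hPc : P c = 0 := orthogonalProjection_mem_subspace_orthogonalComplement_eq_zero (by
      rw [Submodule.mem_orthogonal]
      intro z hz
      exact horth' z hz c hc)
    have h4 : ((P (c + d) : Eν) : H) = d := by
      rw [map_add, hPc, zero_add]
      exact congrArg Subtype.val (orthogonalProjectionOnto_mem_subspace_eq_self (K := Eν) ⟨d, hd⟩)
    rw [h4]
    simpa using hc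
  have hpcont : Continuous fun y : H => y - ((P y : Eν) : H) :=
    continuous_id.sub (continuous_subtype_val.comp (orthogonalProjection Eν).continuous)
  have hpmem : x - (P x : H) ∈ Eμ := by
    have h1 : (fun y : H => y - (P y : H)) x ∈
        (fun y : H => y - (P y : H)) '' closure ((Eμ ⊔ Eν : Submodule ℂ H) : Set H) :=
      Set.mem_image_of_mem _ hxclos
    have h2 := image_closure_subset_closure_image hpcont
      (s := ((Eμ ⊔ Eν : Submodule ℂ H) : Set H))
    have h3 := h2 h1
    have h4 : ((fun y : H => y - (P y : H)) '' ((Eμ ⊔ Eν : Submodule ℂ H) : Set H))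
        ⊆ (Eμ : Set H) := by
      rintro _ ⟨y, hy, rfl⟩
      exact hsub y hy
    have h5 := closure_mono h4 h3
    rwa [hEμc.closure_eq] at h5
  set q : H := (P x : H) with hqdef
  set p : H := x - q with hpdef
  have hqmem : q ∈ Eν := (P x).2
  have hpq : p + q = x := sub_add_cancel x q
  have hipq : ⟪p, q⟫_ℂ = 0 := horth p hpmem q hqmem
  have hxsq : ‖p‖ ^ 2 + ‖q‖ ^ 2 = 1 := by
    have h6 := norm_add_sq_eq_norm_sq_add_norm_sq_of_inner_eq_zero (𝕜 := ℂ) p q hipq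
    rw [hpq, hxnorm] at h6
    rw [pow_two, pow_two]
    linarith [h6]
  have hTxd : T x = (μr:ℂ) • p + (νr:ℂ) • q := by
    have h7 : T p = (μr:ℂ) • p := mem_eigenspace_iff.mp hpmem
    have h8 : T q = (νr:ℂ) • q := mem_eigenspace_iff.mp hqmem
    rw [← hpq, map_add, h7, h8]
  have hTxsq : ‖T x‖ ^ 2 = μr ^ 2 * ‖p‖ ^ 2 + νr ^ 2 * ‖q‖ ^ 2 := by
    have h9 := norm_add_sq_eq_norm_sq_add_norm_sq_of_inner_eq_zero (𝕜 := ℂ)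
      ((μr:ℂ) • p) ((νr:ℂ) • q) (by rw [inner_smul_left, inner_smul_right, hipq]; ring)
    rw [norm_smul, norm_smul] at h9
    simp only [Complex.norm_real, Real.norm_eq_abs, abs_of_nonneg hμ0,
      abs_of_nonneg hν0.le] at h9
    rw [hTxd, pow_two, h9]
    ring
  have hp0 : p = 0 := by
    have h10 : νr ^ 2 ≤ ‖T x‖ ^ 2 := pow_le_pow_left₀ hν0.le hνle 2
    have hsqlt : μr ^ 2 < νr ^ 2 := by nlinarith
    have h12 : ‖p‖ ^ 2 ≤ 0 := by nlinarith [hxsq, hTxsq, h10, hsqlt, sq_nonneg ‖p‖]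
    have h13 : ‖p‖ ^ 2 = 0 := le_antisymm h12 (sq_nonneg _)
    have h11 : ‖p‖ = 0 := pow_eq_zero_iff (n := 2) (by norm_num) |>.mp h13
    exact norm_eq_zero.mp h11
  have hxEν : x ∈ Eν := by
    have : x = q := by rw [← hpq, hp0, zero_add]
    rw [this]
    exact hqmem
  -- Hilbert basis of M and Parseval
  haveI : CompleteSpace M := hMclosed.completeSpace_coe
  set w' : ℕ → M := fun n => ⟨w n, hwM n⟩ with hw'
  have honw' : Orthonormal ℂ w' := by
    rw [orthonormal_iff_ite]
    intro i j
    have h1 := (orthonormal_iff_ite.mp honw) i j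
    rw [Submodule.coe_inner]
    exact h1
  have hspM : ⊤ ≤ (span ℂ (Set.range w')).topologicalClosure := by
    intro z _
    have h1 : Submodule.map M.subtype (span ℂ (Set.range w')) = span ℂ (Set.range w) := by
      rw [Submodule.map_span, ← Set.range_comp]
      rfl
    rw [← SetLike.mem_coe, Submodule.topologicalClosure_coe, closure_subtype]
    have himg : (Subtype.val '' ((span ℂ (Set.range w') : Submodule ℂ M) : Set M))
        = ((span ℂ (Set.range w) : Submodule ℂ H) : Set H) := by
      rw [← h1]
      rfl
    rw [himg]
    exact z.2
  set b := HilbertBasis.mk honw' hspM with hbdef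
  set x' : M := ⟨x, hxM⟩ with hx'def
  have hbeq : ∀ n, b n = w' n := by
    intro n
    rw [hbdef, HilbertBasis.coe_mk]
  have hbnx : ∀ n, ⟪(b n : M), x'⟫_ℂ = (bc n : ℂ) * ⟪v n, x⟫_ℂ := by
    intro n
    have hcoe : ⟪(b n : M), x'⟫_ℂ = ⟪w n, x⟫_ℂ := by rw [hbeq n]; rfl
    rw [hcoe, hw]
    simp only [inner_add_left, inner_smul_left, Complex.conj_ofReal]
    rw [horth _ (humem n) _ hxEν, mul_zero, zero_add]
  have hsum := b.hasSum_inner_mul_inner x' x'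
  have hre : HasSum (fun n => (1 - s n) * ‖⟪v n, x⟫_ℂ‖ ^ 2) 1 := by
    have h1 := hsum.mapL Complex.reCLM
    have h2 : ∀ n, Complex.reCLM (⟪x', b n⟫_ℂ * ⟪b n, x'⟫_ℂ)
        = (1 - s n) * ‖⟪v n, x⟫_ℂ‖ ^ 2 := by
      intro n
      have hcc : ⟪x', (b n : M)⟫_ℂ = (starRingEnd ℂ) ⟪(b n : M), x'⟫_ℂ :=
        (inner_conj_symm x' (b n)).symm
      rw [hcc, hbnx n, mul_comm, Complex.mul_conj]
      simp only [Complex.reCLM_apply, Complex.ofReal_re]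
      rw [Complex.normSq_eq_norm_sq, norm_mul, Complex.norm_real,
        Real.norm_eq_abs, abs_of_nonneg (hb0 n), mul_pow, hb2]
    have h3 : Complex.reCLM ⟪x', x'⟫_ℂ = 1 := by
      have h4 : RCLike.re ⟪x', x'⟫_ℂ = ‖x'‖ ^ 2 := @inner_self_eq_norm_sq ℂ _ _ _ _ x'
      have h5 : ‖x'‖ = 1 := by
        rw [hx'def]
        show ‖x‖ = 1
        exact hxnorm
      rw [Complex.reCLM_apply]
      rw [show (⟪x', x'⟫_ℂ).re = RCLike.re ⟪x', x'⟫_ℂ from rfl, h4, h5, one_pow]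
    convert h1 using 1
    · funext n
      exact (h2 n).symm
    · exact h3.symm
  set d : ℕ → ℝ := fun n => ‖⟪v n, x⟫_ℂ‖ ^ 2 with hddef
  have hd0 : ∀ n, 0 ≤ d n := fun n => by positivity
  have hdsum : Summable d := hv.inner_products_summable x
  have hdle : ∑' n, d n ≤ 1 := by
    have h6 := hv.tsum_inner_products_le (x := x)
    rwa [hxnorm, one_pow] at h6
  by_cases hall : ∀ n, d n = 0
  · have h7 : HasSum (fun n => (1 - s n) * d n) 0 := by
      convert hasSum_zero with n
      rw [hall n, mul_zero]
    exact one_ne_zero (hre.unique h7)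
  · push_neg at hall
    obtain ⟨k, hk⟩ := hall
    have hdk : 0 < d k := lt_of_le_of_ne (hd0 k) (Ne.symm hk)
    have hlt2 : ∑' n, (1 - s n) * d n < ∑' n, d n := by
      apply Summable.tsum_lt_tsum_of_nonneg (i := k)
      · intro n2
        exact mul_nonneg (by linarith [hs1 n2]) (hd0 n2)
      · intro n2
        nlinarith [hs0 n2, hs1 n2, hd0 n2]
      · nlinarith [hs0 k, hs1 k]
      · exact hdsum
    rw [hre.tsum_eq] at hlt2
    linarith


end ANHelpers

theorem positive_AN_at_most_one_infinite_multiplicity {H : Type*}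
    [NormedAddCommGroup H] [InnerProductSpace ℂ H] [CompleteSpace H]
    (T : H →L[ℂ] H) (hT : T.IsPositive)
    (hAN : ∀ M : Submodule ℂ H, IsClosed (M : Set H) → M ≠ ⊥ →
      ∃ x : H, x ∈ M ∧ ‖x‖ = 1 ∧ ‖T x‖ = ‖T.comp M.subtypeL‖) :
    ∀ μ ν : ℂ,
      Module.End.HasEigenvalue (T : H →ₗ[ℂ] H) μ →
      ¬ FiniteDimensional ℂ (Module.End.eigenspace (T : H →ₗ[ℂ] H) μ) →
      Module.End.HasEigenvalue (T : H →ₗ[ℂ] H) ν →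
      ¬ FiniteDimensional ℂ (Module.End.eigenspace (T : H →ₗ[ℂ] H) ν) →
      μ = ν := by
  intro μ ν hμ hμinf hν hνinf
  obtain ⟨himμ, hreμ⟩ := eig_real_nonneg T hT hμ
  obtain ⟨himν, hreν⟩ := eig_real_nonneg T hT hν
  have hμe : μ = ((μ.re : ℝ) : ℂ) := Complex.ext rfl (by simp [himμ])
  have hνe : ν = ((ν.re : ℝ) : ℂ) := Complex.ext rfl (by simp [himν])
  by_contra hne
  have hrene : μ.re ≠ ν.re := fun h => hne (by rw [hμe, hνe, h])
  rcases lt_or_gt_of_ne hrene with h | h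
  · exact core T hT hAN hreμ h (by rw [← hμe]; exact hμinf) (by rw [← hνe]; exact hνinf)
  · exact core T hT hAN hreν h (by rw [← hνe]; exact hνinf) (by rw [← hμe]; exact hμinf)
end

section
/- If T is a diagonalizable bounded operator on a complex Hilbert space with respect to an orthonormal basis B of eigenvectors, and T attains its norm on the unit sphere, then T attains its norm at some basis vector v₀ ∈ B, equivalently ‖T‖ = max over α of |λ_α| where λ_α are the eigenvalues. -/
private lemma conj_mul_re_eq (z : ℂ) : ((starRingEnd ℂ) z * z).re = ‖z‖ ^ 2 := by
  rw [mul_comm, Complex.mul_conj, Complex.ofReal_re, Complex.normSq_eq_norm_sq]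

private lemma parseval_sq {H : Type*} {ι : Type*}
    [NormedAddCommGroup H] [InnerProductSpace ℂ H] [CompleteSpace H]
    (b : HilbertBasis ι ℂ H) (y : H) :
    HasSum (fun i => ‖(inner ℂ (b i) y : ℂ)‖ ^ 2) (‖y‖ ^ 2) := by
  have h := (b.hasSum_inner_mul_inner y y).mapL Complex.reCLM
  have h2 : Complex.reCLM (inner ℂ y y : ℂ) = ‖y‖ ^ 2 := by
    simpa using inner_self_eq_norm_sq (𝕜 := ℂ) y
  rw [h2] at h
  refine h.congr_fun fun i => ?_
  symm
  have hconj : (inner ℂ y (b i) : ℂ) = (starRingEnd ℂ) (inner ℂ (b i) y) :=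
    (inner_conj_symm y (b i)).symm
  rw [Complex.reCLM_apply, hconj, conj_mul_re_eq]

theorem diagonalizable_norming_attains_at_basis_vector {H : Type*} {ι : Type*}
    [NormedAddCommGroup H] [InnerProductSpace ℂ H] [CompleteSpace H]
    (T : H →L[ℂ] H) (b : HilbertBasis ι ℂ H) (lam : ι → ℂ)
    (hb : ∀ i, T (b i) = lam i • b i)
    (hN : ∃ x : H, ‖x‖ = 1 ∧ ‖T x‖ = ‖T‖) :
    ∃ i₀ : ι, ‖T (b i₀)‖ = ‖T‖ ∧ ∀ i, ‖lam i‖ ≤ ‖lam i₀‖ := by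
  classical
  obtain ⟨x, hx1, hx2⟩ := hN
  set c : ι → ℂ := fun i => inner ℂ (b i) x with hc_def
  have ho := orthonormal_iff_ite.mp b.orthonormal
  have hbnorm : ∀ i, ‖b i‖ = 1 := fun i => b.orthonormal.1 i
  have hTbi : ∀ i, ‖T (b i)‖ = ‖lam i‖ := by
    intro i; rw [hb i, norm_smul, hbnorm i, mul_one]
  have hle : ∀ i, ‖lam i‖ ≤ ‖T‖ := by
    intro i
    calc ‖lam i‖ = ‖T (b i)‖ := (hTbi i).symm
    _ ≤ ‖T‖ * ‖b i‖ := T.le_opNorm _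
    _ = ‖T‖ := by rw [hbnorm i, mul_one]
  -- T x as a sum over basis
  have hS : HasSum (fun j => (lam j * c j) • b j) (T x) := by
    have h := (b.hasSum_repr x).mapL T
    refine h.congr_fun fun j => ?_
    symm
    show T (b.repr x j • b j) = (lam j * c j) • b j
    rw [map_smul, hb j, smul_smul, b.repr_apply_apply, mul_comm]
  -- inner of T x with basis vectors
  have hTx : ∀ i, (inner ℂ (b i) (T x) : ℂ) = lam i * c i := by
    intro i
    have h := hS.mapL (innerSL ℂ (b i))
    have h2 : HasSum (fun j => if i = j then lam j * c j else 0)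
        (inner ℂ (b i) (T x) : ℂ) := by
      refine h.congr_fun fun j => ?_
      symm
      show (inner ℂ (b i) ((lam j * c j) • b j) : ℂ) = _
      rw [inner_smul_right, ho i j]
      by_cases hij : i = j <;> simp [hij]
    have h3 : HasSum (fun j => if i = j then lam j * c j else 0)
        (lam i * c i) := by
      refine (hasSum_ite_eq i (lam i * c i)).congr_fun fun j => ?_
      by_cases hij : i = j
      · subst hij; simp
      · simp [hij, Ne.symm hij]
    exact h2.unique h3
  -- Parseval for x and for T x
  have hcx : HasSum (fun i => ‖c i‖ ^ 2) 1 := by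
    simpa [hx1] using parseval_sq b x
  have hTxsum : HasSum (fun i => ‖lam i‖ ^ 2 * ‖c i‖ ^ 2) (‖T‖ ^ 2) := by
    have h := parseval_sq b (T x)
    rw [hx2] at h
    refine h.congr_fun fun i => ?_
    rw [hTx i, norm_mul, mul_pow]
  -- pick a nonzero coefficient
  have hex : ∃ i₀, c i₀ ≠ 0 := by
    by_contra h
    push_neg at h
    have h0 : HasSum (fun i : ι => (0 : ℝ)) 1 := by
      refine hcx.congr_fun fun i => ?_; rw [h i]; simp
    simpa using h0.unique hasSum_zero
  obtain ⟨i₀, hi₀⟩ := hex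
  have hkey : ‖lam i₀‖ = ‖T‖ := by
    by_contra h
    have hlt : ‖lam i₀‖ < ‖T‖ := lt_of_le_of_ne (hle i₀) h
    have hsq : ‖lam i₀‖ ^ 2 < ‖T‖ ^ 2 := by
      apply sq_lt_sq' _ hlt
      linarith [norm_nonneg (lam i₀)]
    have hcpos : 0 < ‖c i₀‖ ^ 2 := pow_pos (norm_pos_iff.mpr hi₀) 2
    have hbig : HasSum (fun i => ‖T‖ ^ 2 * ‖c i‖ ^ 2) (‖T‖ ^ 2) := by
      simpa using hcx.mul_left (‖T‖ ^ 2)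
    have hcontra : ‖T‖ ^ 2 < ‖T‖ ^ 2 := by
      refine hasSum_lt (i := i₀) ?_ ?_ hTxsum hbig
      · intro i
        refine mul_le_mul_of_nonneg_right ?_ (by positivity)
        have h1 := hle i
        have h2 := norm_nonneg (lam i)
        nlinarith
      · exact mul_lt_mul_of_pos_right hsq hcpos
    exact lt_irrefl _ hcontra
  exact ⟨i₀, by rw [hTbi i₀, hkey], fun i => by rw [hkey]; exact hle i⟩
end

section
/- If α ≥ 0, K is a positive compact operator, and F is a self-adjoint finite-rank operator on a complex Hilbert space H, then the operator αI + K + F is absolutely norming: its restriction to every nonzero closed subspace attains its norm. -/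
set_option maxHeartbeats 1000000

open ContinuousLinearMap Metric Filter

local notation "⟪" x ", " y "⟫" => @inner ℂ _ _ x y

section AuxAN

variable {E : Type*} [NormedAddCommGroup E] [InnerProductSpace ℂ E]

lemma AN_aux_sq_le {a b : ℝ} (ha : 0 ≤ a) (hb : 0 ≤ b) (h : a ^ 2 ≤ b ^ 2) : a ≤ b := by
  nlinarith

lemma AN_aux_unit_norm {x : E} (hx : x ≠ 0) : ‖((‖x‖ : ℂ))⁻¹ • x‖ = 1 := by
  rw [norm_smul, norm_inv]
  simp only [Complex.norm_real, Real.norm_eq_abs, abs_norm]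
  exact inv_mul_cancel₀ (norm_ne_zero_iff.mpr hx)

variable [CompleteSpace E]

/-- Cauchy–Schwarz for a positive operator. -/
lemma AN_pos_op_cs (P : E →L[ℂ] E) (hP : P.IsPositive) (x y : E) :
    (RCLike.re ⟪P x, y⟫) ^ 2 ≤ RCLike.re ⟪P x, x⟫ * RCLike.re ⟪P y, y⟫ := by
  have key : ∀ t : ℝ, 0 ≤ RCLike.re ⟪P y, y⟫ * (t * t) +
      (2 * RCLike.re ⟪P x, y⟫) * t + RCLike.re ⟪P x, x⟫ := by
    intro t
    have h0 := hP.re_inner_nonneg_left (x + (t : ℂ) • y)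
    have hsym : RCLike.re ⟪P y, x⟫ = RCLike.re ⟪P x, y⟫ := by
      have h1 : ⟪P y, x⟫ = ⟪y, P x⟫ := by
        conv_lhs => rw [← hP.isSelfAdjoint.adjoint_eq]
        rw [adjoint_inner_left]
      rw [h1, inner_re_symm]
    have hexp : ⟪P (x + (t : ℂ) • y), x + (t : ℂ) • y⟫ =
        ⟪P x, x⟫ + (t : ℂ) * ⟪P x, y⟫ + (t : ℂ) * ⟪P y, x⟫ + (t : ℂ) * (t : ℂ) * ⟪P y, y⟫ := by
      rw [map_add, map_smul, inner_add_left, inner_add_right, inner_add_right,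
        inner_smul_left, inner_smul_right, inner_smul_left, inner_smul_right]
      rw [Complex.conj_ofReal]
      ring
    rw [hexp] at h0
    rw [mul_assoc ((t:ℂ)) ((t:ℂ))] at h0
    simp only [RCLike.re_to_complex, Complex.add_re, Complex.mul_re, Complex.ofReal_re,
      Complex.ofReal_im, zero_mul, sub_zero] at h0
    simp only [RCLike.re_to_complex] at hsym ⊢
    rw [hsym] at h0
    linarith [h0, sq_nonneg t]
  have := discrim_le_zero key
  rw [discrim] at this
  nlinarith [this]

lemma AN_pos_op_norm_sq (P : E →L[ℂ] E) (hP : P.IsPositive) (x : E) :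
    ‖P x‖ ^ 2 ≤ ‖P‖ * RCLike.re ⟪P x, x⟫ := by
  have h := AN_pos_op_cs P hP x (P x)
  have hre : RCLike.re ⟪P x, P x⟫ = ‖P x‖ ^ 2 := by
    rw [← inner_self_eq_norm_sq (𝕜 := ℂ)]
  rw [hre] at h
  have h2 : RCLike.re ⟪P (P x), P x⟫ ≤ ‖P‖ * ‖P x‖ ^ 2 := by
    calc RCLike.re ⟪P (P x), P x⟫ ≤ ‖P (P x)‖ * ‖P x‖ := re_inner_le_norm (𝕜 := ℂ) _ _
      _ ≤ (‖P‖ * ‖P x‖) * ‖P x‖ := by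
          gcongr; exact P.le_opNorm _
      _ = ‖P‖ * ‖P x‖ ^ 2 := by ring
  rcases eq_or_lt_of_le (norm_nonneg (P x)) with h0 | h0
  · rw [← h0]
    have hp : 0 ≤ RCLike.re ⟪P x, x⟫ := hP.re_inner_nonneg_left x
    have : (0:ℝ) ≤ ‖P‖ := norm_nonneg _
    nlinarith
  · have hp : 0 ≤ RCLike.re ⟪P x, x⟫ := hP.re_inner_nonneg_left x
    nlinarith [h, h2, hp, mul_pos h0 h0, mul_le_mul_of_nonneg_left h2 hp]

lemma AN_finrank_isCompact (F : E →L[ℂ] E)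
    (h : FiniteDimensional ℂ (LinearMap.range (F : E →ₗ[ℂ] E))) : IsCompactOperator F := by
  haveI : FiniteDimensional ℂ (LinearMap.range (F : E →ₗ[ℂ] E)) := h
  have hcomp : IsCompact ((↑) '' (closedBall (0 : LinearMap.range (F : E →ₗ[ℂ] E)) ‖F‖) : Set E) :=
    (isCompact_closedBall _ _).image continuous_subtype_val
  refine ⟨_, hcomp, ?_⟩
  have hball : closedBall (0 : E) 1 ⊆ F ⁻¹' ((↑) '' (closedBall (0 : LinearMap.range (F : E →ₗ[ℂ] E)) ‖F‖)) := by
    intro x hx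
    have hxF : F x ∈ LinearMap.range (F : E →ₗ[ℂ] E) := LinearMap.mem_range_self _ x
    refine ⟨⟨F x, hxF⟩, ?_, rfl⟩
    simp only [mem_closedBall, dist_zero_right]
    calc ‖(⟨F x, hxF⟩ : LinearMap.range (F : E →ₗ[ℂ] E))‖ = ‖F x‖ := rfl
      _ ≤ ‖F‖ * ‖x‖ := F.le_opNorm x
      _ ≤ ‖F‖ * 1 := by
          gcongr
          simpa only [mem_closedBall, dist_zero_right] using hx
      _ = ‖F‖ := mul_one _
  exact Filter.mem_of_superset (closedBall_mem_nhds 0 one_pos) hball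

lemma AN_exists_unit_ker (F : E →L[ℂ] E) (hFfin : FiniteDimensional ℂ (LinearMap.range (F : E →ₗ[ℂ] E)))
    (M : Submodule ℂ E) (hM : ¬ FiniteDimensional ℂ M) :
    ∃ e : M, ‖e‖ = 1 ∧ F (e : E) = 0 := by
  set f : M →ₗ[ℂ] LinearMap.range (F : E →ₗ[ℂ] E) :=
    ((F : E →ₗ[ℂ] E).comp M.subtype).codRestrict (LinearMap.range (F : E →ₗ[ℂ] E))
      (fun x => LinearMap.mem_range_self _ _) with hf
  have : ¬ Function.Injective f := by
    intro hinj
    exact hM (FiniteDimensional.of_injective f hinj)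
  rw [injective_iff_map_eq_zero] at this
  push_neg at this
  obtain ⟨x, hx0, hxne⟩ := this
  have hFx : F (x : E) = 0 := by
    have := congrArg (Subtype.val) hx0
    simpa [hf, LinearMap.codRestrict] using this
  refine ⟨(‖x‖ : ℂ)⁻¹ • x, AN_aux_unit_norm hxne, ?_⟩
  simp only [Submodule.coe_smul, map_smul, hFx, smul_zero]

end AuxAN

theorem alphaI_plus_compact_plus_finiteRank_is_AN {H : Type*}
    [NormedAddCommGroup H] [InnerProductSpace ℂ H] [CompleteSpace H]
    (α : ℝ) (hα : 0 ≤ α) (K F : H →L[ℂ] H)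
    (hK : IsCompactOperator K) (hKpos : K.IsPositive)
    (hF : IsSelfAdjoint F) (hFfin : FiniteDimensional ℂ (LinearMap.range (F : H →ₗ[ℂ] H))) :
    ∀ M : Submodule ℂ H, IsClosed (M : Set H) → M ≠ ⊥ →
      ∃ x : H, x ∈ M ∧ ‖x‖ = 1 ∧
        ‖((α : ℂ) • ContinuousLinearMap.id ℂ H + K + F) x‖ =
          ‖((α : ℂ) • ContinuousLinearMap.id ℂ H + K + F).comp M.subtypeL‖ := by
  intro M hMcl hMne
  haveI : CompleteSpace M := hMcl.completeSpace_coe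
  set T : H →L[ℂ] H := (α : ℂ) • ContinuousLinearMap.id ℂ H + K + F with hTdef
  set S : ↥M →L[ℂ] H := T.comp M.subtypeL with hSdef
  -- T is self-adjoint
  have hTsa : IsSelfAdjoint T := by
    have h1 : IsSelfAdjoint ((α : ℂ) • ContinuousLinearMap.id ℂ H) := by
      rw [IsSelfAdjoint, star_smul]
      rw [show ContinuousLinearMap.id ℂ H = (1 : H →L[ℂ] H) from rfl]
      rw [IsSelfAdjoint.star_eq (IsSelfAdjoint.one (R := H →L[ℂ] H))]
      congr 1
      simp [Complex.star_def, Complex.conj_ofReal]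
    exact (h1.add hKpos.isSelfAdjoint).add hF
  have hle : ∀ x : ↥M, ‖x‖ = 1 → ‖T (x : H)‖ ≤ ‖S‖ := by
    intro x hx
    calc ‖T (x : H)‖ = ‖S x‖ := rfl
      _ ≤ ‖S‖ * ‖x‖ := S.le_opNorm x
      _ = ‖S‖ := by rw [hx, mul_one]
  have hST : ∀ x : ↥M, S x = T (x : H) := fun x => rfl
  clear_value T S
  suffices hex : ∃ x : ↥M, ‖x‖ = 1 ∧ ‖S‖ ≤ ‖T (x : H)‖ by
    obtain ⟨x, hx1, hxge⟩ := hex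
    exact ⟨(x : H), x.2, hx1, le_antisymm (hle x hx1) hxge⟩
  by_cases hfd : FiniteDimensional ℂ M
  · -- finite-dimensional case: maximize on the compact sphere
    haveI := hfd
    haveI : ProperSpace (↥M) := FiniteDimensional.proper ℂ (↥M)
    obtain ⟨m, hmM, hm0⟩ := Submodule.ne_bot_iff M |>.mp hMne
    have hmne : (⟨m, hmM⟩ : ↥M) ≠ 0 := by
      simpa [Submodule.mk_eq_zero] using hm0
    set e : ↥M := (‖(⟨m, hmM⟩ : ↥M)‖ : ℂ)⁻¹ • ⟨m, hmM⟩ with hedef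
    have he1 : ‖e‖ = 1 := AN_aux_unit_norm hmne
    have hsph : e ∈ sphere (0 : ↥M) 1 := by
      simpa [mem_sphere, dist_zero_right] using he1
    obtain ⟨x₀, hx₀s, hmax'⟩ := (isCompact_sphere (0 : ↥M) 1).exists_isMaxOn ⟨e, hsph⟩
      (S.continuous.norm).continuousOn
    have hx₀1 : ‖x₀‖ = 1 := by
      simpa [mem_sphere, dist_zero_right] using hx₀s
    refine ⟨x₀, hx₀1, ?_⟩
    rw [← hST x₀]
    have : ‖S‖ ≤ ‖S x₀‖ := by
      refine opNorm_le_bound' S (norm_nonneg _) (fun x hx => ?_)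
      have hxne : x ≠ 0 := norm_ne_zero_iff.mp hx
      set u : ↥M := (‖x‖ : ℂ)⁻¹ • x with hudef
      have hu1 : ‖u‖ = 1 := AN_aux_unit_norm hxne
      have husph : u ∈ sphere (0 : ↥M) 1 := by
        simpa [mem_sphere, dist_zero_right] using hu1
      have hSu : ‖S u‖ = ‖x‖⁻¹ * ‖S x‖ := by
        rw [hudef, map_smul, norm_smul, norm_inv]
        simp only [Complex.norm_real, Real.norm_eq_abs, abs_norm]
      have hmaxu : ‖S u‖ ≤ ‖S x₀‖ := isMaxOn_iff.mp hmax' u husph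
      rw [hSu] at hmaxu
      have hxpos : 0 < ‖x‖ := lt_of_le_of_ne (norm_nonneg x) (Ne.symm hx)
      have hx' : ‖(x : H)‖ ≠ 0 := hx
      calc ‖S x‖ = (‖x‖⁻¹ * ‖S x‖) * ‖x‖ := by field_simp
        _ ≤ ‖S x₀‖ * ‖x‖ := by
            have := hmaxu
            gcongr
    exact this
  · -- infinite-dimensional case
    obtain ⟨e, he1, hFe⟩ := AN_exists_unit_ker F hFfin M hfd
    -- ‖T e‖ ≥ α
    have hTe : α ^ 2 ≤ ‖T (e : H)‖ ^ 2 := by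
      have hTeval : T (e : H) = (α : ℂ) • (e : H) + K (e : H) := by
        rw [hTdef]
        simp [hFe]
      rw [hTeval, @norm_add_sq ℂ]
      have h1 : ‖(α : ℂ) • (e : H)‖ = α := by
        rw [norm_smul]
        have : ‖(e : H)‖ = 1 := he1
        simp [this, Complex.norm_real, abs_of_nonneg hα]
      have h2 : 0 ≤ RCLike.re ⟪(α : ℂ) • (e : H), K (e : H)⟫ := by
        rw [inner_smul_left, Complex.conj_ofReal]
        have := hKpos.re_inner_nonneg_right (e : H)
        simp only [RCLike.re_to_complex, Complex.mul_re, Complex.ofReal_re, Complex.ofReal_im,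
          zero_mul, sub_zero] at *
        exact mul_nonneg hα this
      nlinarith [sq_nonneg ‖K (e : H)‖, h2]
    have hTele : ‖T (e : H)‖ ≤ ‖S‖ := hle e he1
    have hSα : α ≤ ‖S‖ := by
      have h1 : α ≤ ‖T (e : H)‖ := AN_aux_sq_le hα (norm_nonneg _) hTe
      linarith
    set μ : ℝ := ‖S‖ ^ 2 - α ^ 2 with hμdef
    have hμ0 : 0 ≤ μ := by
      simp only [hμdef]
      nlinarith [mul_nonneg (sub_nonneg.mpr hSα) (by linarith : (0:ℝ) ≤ ‖S‖ + α)]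
    rcases eq_or_lt_of_le hμ0 with hμz | hμpos
    · -- μ = 0 : e attains the norm
      refine ⟨e, he1, ?_⟩
      have hS2 : ‖S‖ ^ 2 = α ^ 2 := by simp only [hμdef] at hμz; linarith
      have : ‖S‖ ^ 2 ≤ ‖T (e : H)‖ ^ 2 := by rw [hS2]; exact hTe
      exact AN_aux_sq_le (norm_nonneg S) (norm_nonneg (T (e:H))) (hST e ▸ this)
    · -- μ > 0 : spectral argument via compactness
      have hμne : (μ : ℂ) ≠ 0 := by
        exact_mod_cast ne_of_gt hμpos
      set C : H →L[ℂ] H := K + F with hCdef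
      have hCcpt : IsCompactOperator ⇑C := by
        rw [hCdef]
        have h1 := hK.add (AN_finrank_isCompact F hFfin)
        have h2 : ⇑(K + F) = ⇑K + ⇑F := rfl
        rw [h2]
        exact h1
      have hCsa : IsSelfAdjoint C := hKpos.isSelfAdjoint.add hF
      set Dop : H →L[ℂ] H := T.comp T - ((α : ℂ) ^ 2) • ContinuousLinearMap.id ℂ H with hDdef
      have hDfun : ⇑Dop = (2 * α : ℂ) • ⇑C + (⇑C ∘ ⇑C) := by
        funext z
        simp only [hDdef, hTdef, hCdef, ContinuousLinearMap.sub_apply,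
          ContinuousLinearMap.comp_apply, ContinuousLinearMap.add_apply,
          ContinuousLinearMap.smul_apply, ContinuousLinearMap.id_apply,
          Pi.add_apply, Pi.smul_apply, Function.comp_apply, map_add, map_smul]
        module
      have hDcpt : IsCompactOperator ⇑Dop := by
        rw [hDfun]
        exact (hCcpt.smul ((2 * α : ℂ))).add (hCcpt.comp_clm C)
      have hDsa : IsSelfAdjoint Dop := by
        rw [hDdef]
        have h1 : IsSelfAdjoint (T.comp T) := by
          rw [IsSelfAdjoint]
          show adjoint (T.comp T) = T.comp T
          rw [adjoint_comp, hTsa.adjoint_eq]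
        have h2 : IsSelfAdjoint (((α : ℂ) ^ 2) • ContinuousLinearMap.id ℂ H) := by
          rw [IsSelfAdjoint, star_smul]
          rw [show ContinuousLinearMap.id ℂ H = (1 : H →L[ℂ] H) from rfl]
          rw [IsSelfAdjoint.star_eq (IsSelfAdjoint.one (R := H →L[ℂ] H))]
          congr 1
          simp [Complex.star_def, ← Complex.ofReal_pow, Complex.conj_ofReal]
        exact h1.sub h2
      set Emap : ↥M →L[ℂ] ↥M :=
        M.orthogonalProjectionOnto.comp (Dop.comp M.subtypeL) with hEdef
      have hEcpt : IsCompactOperator ⇑Emap := by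
        have h1 : IsCompactOperator (⇑Dop ∘ ⇑M.subtypeL) := hDcpt.comp_clm M.subtypeL
        have h2 : IsCompactOperator (⇑M.orthogonalProjectionOnto ∘ (⇑Dop ∘ ⇑M.subtypeL)) :=
          h1.continuous_comp M.orthogonalProjectionOnto.continuous
        have h3 : ⇑Emap = ⇑M.orthogonalProjectionOnto ∘ (⇑Dop ∘ ⇑M.subtypeL) := by
          rw [hEdef]; rfl
        rw [h3]; exact h2
      have hEsa : IsSelfAdjoint Emap := by
        rw [IsSelfAdjoint]
        show adjoint Emap = Emap
        rw [hEdef, adjoint_comp, adjoint_comp, Submodule.adjoint_subtypeL,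
          Submodule.adjoint_orthogonalProjection, hDsa.adjoint_eq]
        ext w
        rfl
      have hTTinner : ∀ z : H, RCLike.re ⟪T (T z), z⟫ = ‖T z‖ ^ 2 := by
        intro z
        have h1 := adjoint_inner_left T z (T z)
        rw [hTsa.adjoint_eq] at h1
        rw [h1, ← inner_self_eq_norm_sq (𝕜 := ℂ)]
      have hEinner : ∀ x : ↥M,
          RCLike.re ⟪Emap x, x⟫ = ‖T (x : H)‖ ^ 2 - α ^ 2 * ‖x‖ ^ 2 := by
        intro x
        have h1 : ⟪Emap x, x⟫ = ⟪Dop (x : H), (x : H)⟫ := by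
          rw [hEdef]
          simp only [ContinuousLinearMap.comp_apply, Submodule.subtypeL_apply]
          exact Submodule.inner_orthogonalProjectionOnto_eq_of_mem_right (u := x) (v := Dop (x : H))
        rw [h1, hDdef]
        simp only [ContinuousLinearMap.sub_apply, ContinuousLinearMap.comp_apply,
          ContinuousLinearMap.smul_apply, ContinuousLinearMap.id_apply]
        rw [inner_sub_left, inner_smul_left, map_sub, hTTinner]
        have h2 : ‖(x : H)‖ = ‖x‖ := rfl
        rw [inner_self_eq_norm_sq_to_K (𝕜 := ℂ), h2]
        congr 1
        rw [map_pow, Complex.conj_ofReal]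
        simp [RCLike.re_to_complex, ← Complex.ofReal_pow, ← Complex.ofReal_mul]
      set Pop : ↥M →L[ℂ] ↥M := (μ : ℂ) • (1 : ↥M →L[ℂ] ↥M) - Emap with hPopdef
      have hPopapp : ∀ x : ↥M, Pop x = (μ : ℂ) • x - Emap x := by
        intro x
        rw [hPopdef]
        simp only [ContinuousLinearMap.sub_apply, ContinuousLinearMap.smul_apply,
          ContinuousLinearMap.one_apply]
      have hPopinner : ∀ x : ↥M,
          RCLike.re ⟪Pop x, x⟫ = μ * ‖x‖ ^ 2 - RCLike.re ⟪Emap x, x⟫ := by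
        intro x
        rw [hPopapp x, inner_sub_left, inner_smul_left, Complex.conj_ofReal, map_sub]
        congr 1
        rw [inner_self_eq_norm_sq_to_K (𝕜 := ℂ)]
        simp [RCLike.re_to_complex, ← Complex.ofReal_pow, ← Complex.ofReal_mul]
      have hone : IsSelfAdjoint ((μ : ℂ) • (1 : ↥M →L[ℂ] ↥M)) := by
        rw [IsSelfAdjoint, star_smul, IsSelfAdjoint.star_eq (IsSelfAdjoint.one (R := ↥M →L[ℂ] ↥M))]
        congr 1
        simp [Complex.star_def, Complex.conj_ofReal]
      have hPopsa : IsSelfAdjoint Pop := by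
        rw [hPopdef]
        exact IsSelfAdjoint.sub (R := ↥M →L[ℂ] ↥M) hone hEsa
      have hPoppos : Pop.IsPositive := by
        rw [isPositive_def']
        refine ⟨hPopsa, fun x => ?_⟩
        rw [ContinuousLinearMap.reApplyInnerSelf_apply, hPopinner x, hEinner x]
        have h3 : ‖T (x : H)‖ ≤ ‖S‖ * ‖x‖ := by rw [← hST x]; exact S.le_opNorm x
        have h5 := mul_self_le_mul_self (norm_nonneg (T (x : H))) h3
        simp only [hμdef]
        nlinarith [h5, sq_nonneg ‖x‖, norm_nonneg x, norm_nonneg S]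
      -- maximizing sequence
      have hSpos : 0 < ‖S‖ := by
        rcases lt_or_eq_of_le (norm_nonneg S) with h | h
        · exact h
        · exfalso
          simp only [hμdef] at hμpos
          nlinarith [hα, hμpos]
      have hseq : ∀ n : ℕ, ∃ x : ↥M, ‖x‖ = 1 ∧
          ‖S‖ * (1 - 1 / ((n : ℝ) + 1)) < ‖S x‖ := by
        intro n
        have hfrac0 : 0 < 1 / ((n : ℝ) + 1) := by positivity
        have hfrac1 : 1 / ((n : ℝ) + 1) ≤ 1 := by
          rw [div_le_one (by positivity)]
          simp
        have hr0 : 0 ≤ ‖S‖ * (1 - 1 / ((n : ℝ) + 1)) := by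
          apply mul_nonneg (norm_nonneg S)
          linarith
        have hr : ‖S‖ * (1 - 1 / ((n : ℝ) + 1)) < ‖S‖ := by
          nlinarith [hSpos, hfrac0]
        obtain ⟨y, hy1, hyr⟩ := S.exists_lt_apply_of_lt_opNorm hr
        have hyne : y ≠ 0 := by
          intro h0
          rw [h0] at hyr
          simp only [map_zero, norm_zero] at hyr
          linarith
        have hypos : 0 < ‖y‖ := norm_pos_iff.mpr hyne
        refine ⟨(‖y‖ : ℂ)⁻¹ • y, AN_aux_unit_norm hyne, ?_⟩
        rw [map_smul, norm_smul, norm_inv]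
        simp only [Complex.norm_real, Real.norm_eq_abs, abs_norm]
        calc ‖S‖ * (1 - 1 / ((n : ℝ) + 1)) < ‖S y‖ := hyr
          _ = 1 * ‖S y‖ := (one_mul _).symm
          _ ≤ ‖y‖⁻¹ * ‖S y‖ := by
              apply mul_le_mul_of_nonneg_right _ (norm_nonneg (S y))
              exact (one_le_inv_iff₀).mpr ⟨hypos, le_of_lt hy1⟩
      choose x hx1 hxS using hseq
      -- ‖S (x n)‖ → ‖S‖
      have hfr : Tendsto (fun n : ℕ => 1 / ((n : ℝ) + 1)) atTop (nhds 0) :=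
        tendsto_one_div_add_atTop_nhds_zero_nat
      have hlow : Tendsto (fun n : ℕ => ‖S‖ * (1 - 1 / ((n : ℝ) + 1))) atTop (nhds ‖S‖) := by
        have h1 : Tendsto (fun n : ℕ => (1 : ℝ) - 1 / ((n : ℝ) + 1)) atTop (nhds 1) := by
          have := tendsto_const_nhds (x := (1 : ℝ)) (f := atTop (α := ℕ)) |>.sub hfr
          simpa using this
        have h2 := h1.const_mul ‖S‖
        simpa using h2
      have hconv : Tendsto (fun n => ‖S (x n)‖) atTop (nhds ‖S‖) := by
        refine tendsto_of_tendsto_of_tendsto_of_le_of_le hlow tendsto_const_nhds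
          (fun n => le_of_lt (hxS n)) (fun n => ?_)
        rw [hST]
        exact hle _ (hx1 n)
      -- re ⟪Emap (x n), x n⟫ → μ
      have hEten : Tendsto (fun n => RCLike.re ⟪Emap (x n), x n⟫) atTop (nhds μ) := by
        have heq : ∀ n, RCLike.re ⟪Emap (x n), x n⟫ = ‖S (x n)‖ ^ 2 - α ^ 2 := by
          intro n
          rw [hEinner, ← hST, hx1 n]
          ring
        have h1 : Tendsto (fun n => ‖S (x n)‖ ^ 2 - α ^ 2) atTop (nhds (‖S‖ ^ 2 - α ^ 2)) :=
          (hconv.pow 2).sub_const (α ^ 2)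
        rw [funext heq, hμdef]
        exact h1
      -- re ⟪Pop (x n), x n⟫ → 0
      have hPten : Tendsto (fun n => RCLike.re ⟪Pop (x n), x n⟫) atTop (nhds 0) := by
        have heq : ∀ n, RCLike.re ⟪Pop (x n), x n⟫ = μ - RCLike.re ⟪Emap (x n), x n⟫ := by
          intro n
          rw [hPopinner, hx1 n]
          ring
        have h1 := (tendsto_const_nhds (x := μ) (f := atTop (α := ℕ))).sub hEten
        rw [sub_self] at h1
        rw [funext heq]
        exact h1
      -- ‖Pop (x n)‖ → 0
      have hPnorm : Tendsto (fun n => ‖Pop (x n)‖) atTop (nhds 0) := by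
        have hb : ∀ n, ‖Pop (x n)‖ ^ 2 ≤ ‖Pop‖ * RCLike.re ⟪Pop (x n), x n⟫ :=
          fun n => AN_pos_op_norm_sq Pop hPoppos (x n)
        have hsq : Tendsto (fun n => ‖Pop (x n)‖ ^ 2) atTop (nhds 0) := by
          have h1 := hPten.const_mul ‖Pop‖
          rw [mul_zero] at h1
          exact tendsto_of_tendsto_of_tendsto_of_le_of_le tendsto_const_nhds h1
            (fun n => sq_nonneg _) hb
        have h2 : Tendsto (fun n => Real.sqrt (‖Pop (x n)‖ ^ 2)) atTop (nhds (Real.sqrt 0)) :=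
          hsq.sqrt
        have h3 : (fun n => Real.sqrt (‖Pop (x n)‖ ^ 2)) = fun n => ‖Pop (x n)‖ :=
          funext fun n => Real.sqrt_sq (norm_nonneg _)
        rw [h3, Real.sqrt_zero] at h2
        exact h2
      have hP0 : Tendsto (fun n => Pop (x n)) atTop (nhds 0) :=
        tendsto_zero_iff_norm_tendsto_zero.mpr hPnorm
      -- compactness: extract a convergent subsequence of Emap (x n)
      obtain ⟨Kc, hKc, hKcsub⟩ := hEcpt.image_closedBall_subset_compact (𝕜₁ := ℂ) 1
      have hmem : ∀ n, Emap (x n) ∈ Kc := by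
        intro n
        apply hKcsub
        refine Set.mem_image_of_mem _ ?_
        simp [Metric.mem_closedBall, dist_zero_right, hx1 n]
      obtain ⟨y, hyK, φ, hφ, hφten⟩ := hKc.tendsto_subseq hmem
      -- μ • x (φ k) → y
      have hsmul : ∀ n, (μ : ℂ) • (x n) = Emap (x n) + Pop (x n) := by
        intro n
        rw [hPopapp]
        abel
      have h2 : Tendsto (fun k => (μ : ℂ) • x (φ k)) atTop (nhds y) := by
        have ha := hφten.add ((hP0.comp (hφ.tendsto_atTop)))
        rw [add_zero] at ha
        have hb : ((fun n => Emap (x n)) ∘ φ) + ((fun n => Pop (x n)) ∘ φ)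
            = fun k => (μ : ℂ) • x (φ k) := by
          funext k
          simp only [Pi.add_apply, Function.comp_apply]
          rw [hsmul]
        rw [← hb]
        exact ha
      set z : ↥M := (μ : ℂ)⁻¹ • y with hzdef
      have hxz : Tendsto (fun k => x (φ k)) atTop (nhds z) := by
        have h3 := h2.const_smul ((μ : ℂ)⁻¹)
        have h4 : (fun k => (μ : ℂ)⁻¹ • ((μ : ℂ) • x (φ k))) = fun k => x (φ k) := by
          funext k
          rw [inv_smul_smul₀ hμne]
        rw [← h4]
        exact h3
      have hz1 : ‖z‖ = 1 := by
        have hn : Tendsto (fun k => ‖x (φ k)‖) atTop (nhds ‖z‖) := hxz.norm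
        have hn2 : (fun k => ‖x (φ k)‖) = fun _ => (1 : ℝ) := funext fun k => hx1 _
        rw [hn2] at hn
        exact (tendsto_nhds_unique hn tendsto_const_nhds)
      have hyz : (μ : ℂ) • z = y := by
        rw [hzdef, smul_inv_smul₀ hμne]
      have hEz : Emap z = (μ : ℂ) • z := by
        have hEz1 : Tendsto (fun k => Emap (x (φ k))) atTop (nhds (Emap z)) :=
          (Emap.continuous.tendsto z).comp hxz
        have hEz2 : Emap z = y := tendsto_nhds_unique hEz1 hφten
        rw [hEz2, hyz]
      clear_value z
      -- conclude
      have hfin : RCLike.re ⟪Emap z, z⟫ = μ := by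
        rw [hEz, inner_smul_left, Complex.conj_ofReal, inner_self_eq_norm_sq_to_K (𝕜 := ℂ), hz1]
        simp [RCLike.re_to_complex]
      have hzn := hEinner z
      rw [hfin, hz1] at hzn
      refine ⟨z, hz1, ?_⟩
      have hsq2 : ‖S‖ ^ 2 ≤ ‖T (z : H)‖ ^ 2 := by
        rw [one_pow, mul_one] at hzn
        linarith [hμdef, hzn]
      exact AN_aux_sq_le (norm_nonneg S) (norm_nonneg (T (z : H))) hsq2
end
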